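/- arXiv:1912.04310 — 2 statements merged into one kernel-verified Lean document; each statement's English description precedes it below -/
import Mathlib

section
/- Let r ∈ [1,∞) and define f_d : ℝ^d → ℝ by f_d(x) = Π_{i=1}^d x_i. Then for every integer d ≥ 2 and every ε ∈ (0, min{1/2, r^{−1}}] there exists a skeleton φ with ReLU-realization R_ReLU(φ) : ℝ^d → ℝ such that: 1) sup_{x∈[−r,r]^d} |f_d(x) − R_ReLU(φ)(x)| ≤ ε; 2) R_ReLU(φ) is 8^{(d−1)/2}·r^{d(d−1)}-Lipschitz on ℝ^d; 3) P(φ) ≤ (1/3)·10⁵·log₂(d)·d⁶·log₂(ε^{−1}) if r = 1; and 4) P(φ) ≤ (2/5)·10⁵·log₂(r)·log₂(d)·d⁸·log₂(ε^{−1}) if r ≥ 2. -/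
open scoped BigOperators ENNReal

noncomputable section

/-- The rectified linear unit activation function. -/
def ReLU (x : ℝ) : ℝ := max x 0

/-- Truncation of a real sequence to its first `n` entries. -/
def trunc (n : ℕ) (x : ℕ → ℝ) : ℕ → ℝ := fun j => if j < n then x j else 0

/-- Embedding of a Euclidean vector into the space of real sequences. -/
def emb (n : ℕ) (x : EuclideanSpace ℝ (Fin n)) : ℕ → ℝ :=
  fun j => if h : j < n then x ⟨j, h⟩ else 0

/-- A neural network skeleton of depth `Dm + 1`.  The layer dimensions are
`l 0, …, l (Dm + 1)`; the weight matrix of layer `k + 1` is `V k` (a matrix of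
size `l (k+1) × l k`, stored as a doubly indexed sequence) and its bias is `b k`.
Entries beyond the relevant ranges are irrelevant junk. -/
structure NN where
  Dm : ℕ
  l : ℕ → ℕ
  V : ℕ → ℕ → ℕ → ℝ
  b : ℕ → ℕ → ℝ

namespace NN

/-- Depth `D(φ)` of a skeleton. -/
def depth (φ : NN) : ℕ := φ.Dm + 1

/-- Number of parameters `P(φ) = ∑_{k=1}^{D} l_k (l_{k-1} + 1)`. -/
def P (φ : NN) : ℕ := ∑ k ∈ Finset.range φ.depth, φ.l (k + 1) * (φ.l k + 1)

/-- The affine map `A_{k+1}(x) = V_{k+1} x + b_{k+1}` of a skeleton. -/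
def aff (φ : NN) (k : ℕ) (x : ℕ → ℝ) : ℕ → ℝ :=
  fun i => (∑ j ∈ Finset.range (φ.l k), φ.V k i j * x j) + φ.b k i

/-- State after `k` layers, with the activation applied after each affine map. -/
def hidden (a : ℝ → ℝ) (φ : NN) : ℕ → (ℕ → ℝ) → ℕ → ℝ
  | 0 => fun x => x
  | k + 1 => fun x i => a (φ.aff k (φ.hidden a k x) i)

/-- The `a`-realization `R_a(φ) = A_D ∘ a ∘ A_{D-1} ∘ ⋯ ∘ a ∘ A_1`, acting on
sequences (only the first `l 0` input coordinates and the first `l D` output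
coordinates are meaningful). -/
def fullReal (a : ℝ → ℝ) (φ : NN) (x : ℕ → ℝ) : ℕ → ℝ :=
  φ.aff φ.Dm (φ.hidden a φ.Dm (trunc (φ.l 0) x))

/-- The `a`-realization as a map `ℝ^m → ℝ^n` (meaningful when `l 0 = m` and
`l D = n`). -/
def realAs (a : ℝ → ℝ) (φ : NN) (m n : ℕ) (x : EuclideanSpace ℝ (Fin m)) :
    EuclideanSpace ℝ (Fin n) :=
  WithLp.toLp 2 (fun i => φ.fullReal a (emb m x) i)

/-- The `a`-realization as a scalar-valued map `ℝ^m → ℝ`. -/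
def realScalar (a : ℝ → ℝ) (φ : NN) (m : ℕ) (x : EuclideanSpace ℝ (Fin m)) : ℝ :=
  φ.fullReal a (emb m x) 0

/-- The `a`-realization as a map `ℝ → ℝ`. -/
def real1 (a : ℝ → ℝ) (φ : NN) (x : ℝ) : ℝ :=
  φ.fullReal a (fun j => if j = 0 then x else 0) 0

/-- Concatenation `ψ ∘ φ` of two skeletons (meaningful when
`l_{D(φ)}(φ) = l_0(ψ)`). -/
def comp (ψ φ : NN) : NN where
  Dm := φ.Dm + ψ.Dm
  l := fun k => if k < φ.depth then φ.l k else ψ.l (k + 1 - φ.depth)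
  V := fun k =>
    if k < φ.Dm then φ.V k
    else if k = φ.Dm then fun i j => ∑ m ∈ Finset.range (ψ.l 0), ψ.V 0 i m * φ.V φ.Dm m j
    else ψ.V (k - φ.Dm)
  b := fun k =>
    if k < φ.Dm then φ.b k
    else if k = φ.Dm then
      fun i => (∑ m ∈ Finset.range (ψ.l 0), ψ.V 0 i m * φ.b φ.Dm m) + ψ.b 0 i
    else ψ.b (k - φ.Dm)

/-- Offset of the `q`-th block in layer `k` of a parallelization. -/
def poff (ν : ℕ → NN) (k q : ℕ) : ℕ := ∑ j ∈ Finset.range q, (ν j).l k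

/-- Parallelization `p(φ_1, …, φ_n)` of `n` skeletons (meaningful when they all
have the same depth): block-diagonal weight matrices and concatenated biases. -/
def parallel (n : ℕ) (ν : ℕ → NN) : NN where
  Dm := (ν 0).Dm
  l := fun k => ∑ j ∈ Finset.range n, (ν j).l k
  V := fun k i j =>
    ∑ q ∈ Finset.range n,
      if poff ν (k + 1) q ≤ i ∧ i < poff ν (k + 1) q + (ν q).l (k + 1) ∧
          poff ν k q ≤ j ∧ j < poff ν k q + (ν q).l k then
        (ν q).V k (i - poff ν (k + 1) q) (j - poff ν k q)
      else 0
  b := fun k i =>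
    ∑ q ∈ Finset.range n,
      if poff ν (k + 1) q ≤ i ∧ i < poff ν (k + 1) q + (ν q).l (k + 1) then
        (ν q).b k (i - poff ν (k + 1) q)
      else 0

/-- The activation `a` fulfills the `c`-identity requirement, witnessed by the
skeleton `I`: `I` has depth 2, input and output dimension 1, hidden dimension
at most `c`, and its `a`-realization is the identity on `ℝ`. -/
def IdReq (a : ℝ → ℝ) (c : ℝ) (I : NN) : Prop :=
  I.Dm = 1 ∧ I.l 0 = 1 ∧ I.l 2 = 1 ∧ (I.l 1 : ℝ) ≤ c ∧
    ∀ x : ℕ → ℝ, I.fullReal a x 0 = x 0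

/-- The `d`-fold parallelization `I_d` of an identity skeleton. -/
def Idn (I : NN) (d : ℕ) : NN := parallel d fun _ => I

/-- Concatenate `m` identity networks after `φ`. -/
def padAfter (I φ : NN) : ℕ → NN
  | 0 => φ
  | m + 1 => comp (Idn I ((padAfter I φ m).l (padAfter I φ m).depth)) (padAfter I φ m)

/-- Concatenate `m` identity networks in front of `φ`. -/
def padBefore (I φ : NN) : ℕ → NN
  | 0 => φ
  | m + 1 => comp (padBefore I φ m) (Idn I ((padBefore I φ m).l 0))

/-- Diagonal ("staggered") parallelization `p_I(φ_1, …, φ_n)` of arbitrary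
skeletons, obtained by padding each `φ_q` with identity networks so that all
have equal depth and then parallelizing. -/
def dpar (I : NN) (n : ℕ) (ν : ℕ → NN) : NN :=
  parallel n fun q =>
    padAfter I (padBefore I (ν q) (∑ j ∈ Finset.range q, (ν j).depth))
      (∑ j ∈ Finset.Ico (q + 1) n, (ν j).depth)

end NN

namespace PA

lemma relu_nonneg (x : ℝ) : 0 ≤ ReLU x := le_max_right _ _
lemma relu_of_nonneg {x : ℝ} (h : 0 ≤ x) : ReLU x = x := max_eq_left h
lemma relu_of_nonpos {x : ℝ} (h : x ≤ 0) : ReLU x = 0 := max_eq_right h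
lemma relu_zero : ReLU 0 = 0 := relu_of_nonpos le_rfl
lemma relu_relu (x : ℝ) : ReLU (ReLU x) = ReLU x := relu_of_nonneg (relu_nonneg x)

lemma relu_sub_relu_neg (x : ℝ) : ReLU x - ReLU (-x) = x := by
  unfold ReLU
  rcases le_total x 0 with h | h
  · rw [max_eq_right h, max_eq_left (by linarith)]; ring
  · rw [max_eq_left h, max_eq_right (by linarith)]; ring

lemma relu_add_relu_neg (x : ℝ) : ReLU x + ReLU (-x) = |x| := by
  unfold ReLU
  rcases le_total x 0 with h | h
  · rw [max_eq_right h, max_eq_left (by linarith), abs_of_nonpos h]; ring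
  · rw [max_eq_left h, max_eq_right (by linarith), abs_of_nonneg h]; ring

lemma relu_lip (a b : ℝ) : |ReLU a - ReLU b| ≤ |a - b| := abs_max_sub_max_le_abs a b 0

/-- The tent map built from ReLUs. -/
def gg (x : ℝ) : ℝ := 2 * ReLU x - 4 * ReLU (x - 1/2) + 2 * ReLU (x - 1)

lemma gg_eq_min (x : ℝ) : gg x = 2 * min (ReLU x) (ReLU (1 - x)) := by
  unfold gg ReLU
  rcases le_total x 0 with h0 | h0
  · rw [max_eq_right h0, max_eq_right (by linarith : x - 1/2 ≤ 0),
      max_eq_right (by linarith : x - 1 ≤ 0), max_eq_left (by linarith : (0:ℝ) ≤ 1 - x),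
      min_eq_left (by linarith)]
    ring
  · rcases le_total x (1/2) with h1 | h1
    · rw [max_eq_left h0, max_eq_right (by linarith : x - 1/2 ≤ 0),
        max_eq_right (by linarith : x - 1 ≤ 0), max_eq_left (by linarith : (0:ℝ) ≤ 1 - x),
        min_eq_left (by linarith)]
      ring
    · rcases le_total x 1 with h2 | h2
      · rw [max_eq_left h0, max_eq_left (by linarith : (0:ℝ) ≤ x - 1/2),
          max_eq_right (by linarith : x - 1 ≤ 0), max_eq_left (by linarith : (0:ℝ) ≤ 1 - x),
          min_eq_right (by linarith)]
        ring
      · rw [max_eq_left h0, max_eq_left (by linarith : (0:ℝ) ≤ x - 1/2),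
          max_eq_left (by linarith : (0:ℝ) ≤ x - 1), max_eq_right (by linarith : 1 - x ≤ 0),
          min_eq_right (by linarith)]
        ring

lemma gg_nonneg (x : ℝ) : 0 ≤ gg x := by
  rw [gg_eq_min]
  have := relu_nonneg x
  have := relu_nonneg (1 - x)
  have : 0 ≤ min (ReLU x) (ReLU (1 - x)) := le_min ‹0 ≤ ReLU x› ‹0 ≤ ReLU (1 - x)›
  linarith

lemma gg_le_one (x : ℝ) : gg x ≤ 1 := by
  rw [gg_eq_min]
  rcases le_total x (1/2) with h | h
  · have h1 : min (ReLU x) (ReLU (1 - x)) ≤ ReLU x := min_le_left _ _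
    have h2 : ReLU x ≤ 1/2 := by unfold ReLU; rw [max_le_iff]; constructor <;> linarith
    linarith
  · have h1 : min (ReLU x) (ReLU (1 - x)) ≤ ReLU (1 - x) := min_le_right _ _
    have h2 : ReLU (1 - x) ≤ 1/2 := by unfold ReLU; rw [max_le_iff]; constructor <;> linarith
    linarith

lemma gg_of_ge_one {x : ℝ} (h : 1 ≤ x) : gg x = 0 := by
  rw [gg_eq_min, relu_of_nonpos (by linarith : 1 - x ≤ 0),
    min_eq_right (relu_nonneg x)]
  ring

lemma gg_zero : gg 0 = 0 := by
  rw [gg_eq_min, relu_zero, min_eq_left (relu_nonneg _)]; ring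

lemma gg_lip (a b : ℝ) : |gg a - gg b| ≤ 2 * |a - b| := by
  rw [gg_eq_min, gg_eq_min, ← mul_sub, abs_mul, abs_two]
  have h := abs_min_sub_min_le_max (ReLU a) (ReLU (1 - a)) (ReLU b) (ReLU (1 - b))
  have h1 := relu_lip a b
  have h2 := relu_lip (1 - a) (1 - b)
  have h3 : |1 - a - (1 - b)| = |a - b| := by rw [show (1:ℝ) - a - (1 - b) = -(a - b) by ring, abs_neg]
  have : |min (ReLU a) (ReLU (1 - a)) - min (ReLU b) (ReLU (1 - b))| ≤ |a - b| := by
    refine h.trans (max_le h1 ?_)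
    rw [← h3]; exact h2
  linarith

lemma gg_on_left {x : ℝ} (h0 : 0 ≤ x) (h : x ≤ 1/2) : gg x = 2 * x := by
  unfold gg
  rw [relu_of_nonneg h0, relu_of_nonpos (by linarith : x - 1/2 ≤ 0),
    relu_of_nonpos (by linarith : x - 1 ≤ 0)]
  ring

lemma gg_on_right {x : ℝ} (h : 1/2 ≤ x) (h1 : x ≤ 1) : gg x = 2 - 2 * x := by
  unfold gg
  rw [relu_of_nonneg (by linarith : (0:ℝ) ≤ x), relu_of_nonneg (by linarith : (0:ℝ) ≤ x - 1/2),
    relu_of_nonpos (by linarith : x - 1 ≤ 0)]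
  ring

lemma gg_funeq {x : ℝ} (h0 : 0 ≤ x) (h1 : x ≤ 1) :
    x - x^2 = gg x / 4 + (gg x - (gg x)^2) / 4 := by
  rcases le_total x (1/2) with h | h
  · rw [gg_on_left h0 h]; ring
  · rw [gg_on_right h h1]; ring

lemma gg_iter_mem {x : ℝ} (h0 : 0 ≤ x) (h1 : x ≤ 1) (k : ℕ) :
    0 ≤ gg^[k] x ∧ gg^[k] x ≤ 1 := by
  cases k with
  | zero => exact ⟨h0, h1⟩
  | succ n =>
    rw [Function.iterate_succ_apply']
    exact ⟨gg_nonneg _, gg_le_one _⟩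

def gS (m : ℕ) (t : ℝ) : ℝ := ∑ i ∈ Finset.range m, gg^[i+1] t / 4^(i+1)

def FF (m : ℕ) (t : ℝ) : ℝ := t - gS m t

lemma FF_zero (t : ℝ) : FF 0 t = t := by simp [FF, gS]

lemma FF_succ (m : ℕ) (t : ℝ) : FF (m+1) t = FF m t - gg^[m+1] t / 4^(m+1) := by
  unfold FF gS
  rw [Finset.sum_range_succ]
  ring

lemma FF_key {t : ℝ} (h0 : 0 ≤ t) (h1 : t ≤ 1) (m : ℕ) :
    FF m t - t^2 = (gg^[m] t - (gg^[m] t)^2) / 4^m := by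
  induction m with
  | zero => simp [FF_zero]
  | succ n ih =>
    have hm := gg_iter_mem h0 h1 n
    have hfe := gg_funeq hm.1 hm.2
    rw [FF_succ, Function.iterate_succ_apply']
    linear_combination ih + hfe / (4:ℝ)^n

lemma FF_err {t : ℝ} (h0 : 0 ≤ t) (h1 : t ≤ 1) (m : ℕ) :
    0 ≤ FF m t - t^2 ∧ FF m t - t^2 ≤ 1 / (4 * 4^m) := by
  have hy := gg_iter_mem h0 h1 m
  rw [FF_key h0 h1 m]
  constructor
  · apply div_nonneg _ (by positivity)
    nlinarith [hy.1, hy.2]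
  · have h14 : gg^[m] t - (gg^[m] t)^2 ≤ 1/4 := by nlinarith [sq_nonneg (gg^[m] t - 1/2)]
    calc (gg^[m] t - (gg^[m] t)^2) / 4^m ≤ (1/4) / 4^m := by gcongr
      _ = 1 / (4 * 4^m) := by rw [div_div]

lemma gg_iter_zero (k : ℕ) : gg^[k] 0 = 0 := by
  induction k with
  | zero => rfl
  | succ n ih => rw [Function.iterate_succ_apply', ih, gg_zero]

lemma FF_nonneg {t : ℝ} (h0 : 0 ≤ t) (m : ℕ) : 0 ≤ FF m t := by
  rcases le_total t 1 with h1 | h1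
  · have h := (FF_err h0 h1 m).1
    nlinarith [sq_nonneg t]
  · have hz : ∀ i : ℕ, gg^[i+1] t = 0 := by
      intro i
      rw [Function.iterate_succ_apply, gg_of_ge_one h1, gg_iter_zero]
    unfold FF gS
    simp only [hz, zero_div, Finset.sum_const_zero]
    linarith

lemma gg_iter_lip (k : ℕ) (a b : ℝ) : |gg^[k] a - gg^[k] b| ≤ 2^k * |a - b| := by
  induction k with
  | zero => simp
  | succ n ih =>
    rw [Function.iterate_succ_apply', Function.iterate_succ_apply']
    calc |gg (gg^[n] a) - gg (gg^[n] b)| ≤ 2 * |gg^[n] a - gg^[n] b| := gg_lip _ _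
      _ ≤ 2 * (2^n * |a - b|) := by linarith [ih, abs_nonneg (gg^[n] a - gg^[n] b)]
      _ = 2^(n+1) * |a - b| := by ring

lemma geom_le_one (m : ℕ) : ∑ i ∈ Finset.range m, ((1:ℝ)/2)^(i+1) ≤ 1 := by
  have h : ∀ i : ℕ, ((1:ℝ)/2)^(i+1) = (1/2)^i * (1/2) := fun i => pow_succ _ _
  calc ∑ i ∈ Finset.range m, ((1:ℝ)/2)^(i+1)
      = (∑ i ∈ Finset.range m, ((1:ℝ)/2)^i) * (1/2) := by
        rw [Finset.sum_mul]; exact Finset.sum_congr rfl fun i _ => h i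
    _ ≤ 2 * (1/2) := by
        apply mul_le_mul_of_nonneg_right (sum_geometric_two_le m) (by norm_num)
    _ = 1 := by norm_num

lemma FF_lip (m : ℕ) (a b : ℝ) : |FF m a - FF m b| ≤ 2 * |a - b| := by
  have hsum : |gS m a - gS m b| ≤ |a - b| := by
    unfold gS
    rw [← Finset.sum_sub_distrib]
    refine (Finset.abs_sum_le_sum_abs _ _).trans ?_
    have hb : ∀ i ∈ Finset.range m,
        |gg^[i+1] a / 4^(i+1) - gg^[i+1] b / 4^(i+1)| ≤ ((1:ℝ)/2)^(i+1) * |a - b| := by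
      intro i _
      rw [div_sub_div_same, abs_div, abs_of_nonneg (by positivity : (0:ℝ) ≤ 4^(i+1)),
        div_le_iff₀ (by positivity)]
      have hpow : ((1:ℝ)/2)^(i+1) * 4^(i+1) = 2^(i+1) := by
        rw [← mul_pow]; norm_num
      calc |gg^[i+1] a - gg^[i+1] b| ≤ 2^(i+1) * |a - b| := gg_iter_lip _ _ _
        _ = (1/2)^(i+1) * |a - b| * 4^(i+1) := by rw [mul_right_comm, hpow]
    refine (Finset.sum_le_sum hb).trans ?_
    rw [← Finset.sum_mul]
    calc (∑ i ∈ Finset.range m, ((1:ℝ)/2)^(i+1)) * |a - b| ≤ 1 * |a - b| := by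
          apply mul_le_mul_of_nonneg_right (geom_le_one m) (abs_nonneg _)
      _ = |a - b| := one_mul _
  unfold FF
  calc |a - gS m a - (b - gS m b)| = |(a - b) - (gS m a - gS m b)| := by
        rw [show a - gS m a - (b - gS m b) = (a - b) - (gS m a - gS m b) by ring]
    _ ≤ |a - b| + |gS m a - gS m b| := abs_sub _ _
    _ ≤ 2 * |a - b| := by linarith


/-! ### Clamp -/

def clamp (c z : ℝ) : ℝ := ReLU (z + c) - ReLU (z - c) - c

lemma clamp_eq_maxmin {c : ℝ} (hc : 0 ≤ c) (z : ℝ) :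
    clamp c z = max (min z c) (-c) := by
  unfold clamp ReLU
  rcases le_total z (-c) with h | h
  · rw [max_eq_right (by linarith : z + c ≤ 0), max_eq_right (by linarith : z - c ≤ 0),
      min_eq_left (by linarith : z ≤ c), max_eq_right h]
    ring
  · rcases le_total z c with h2 | h2
    · rw [max_eq_left (by linarith : (0:ℝ) ≤ z + c), max_eq_right (by linarith : z - c ≤ 0),
        min_eq_left h2, max_eq_left (by linarith : -c ≤ z)]
      ring
    · rw [max_eq_left (by linarith : (0:ℝ) ≤ z + c), max_eq_left (by linarith : (0:ℝ) ≤ z - c),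
        min_eq_right h2, max_eq_left (by linarith : -c ≤ c)]
      ring

lemma clamp_abs_le {c : ℝ} (hc : 0 ≤ c) (z : ℝ) : |clamp c z| ≤ c := by
  rw [clamp_eq_maxmin hc, abs_le]
  constructor
  · exact le_max_right _ _
  · exact max_le (le_trans (min_le_right _ _) le_rfl) (by linarith)

lemma clamp_of_abs_le {c z : ℝ} (h : |z| ≤ c) : clamp c z = z := by
  have hc : 0 ≤ c := (abs_nonneg z).trans h
  rw [abs_le] at h
  rw [clamp_eq_maxmin hc, min_eq_left h.2, max_eq_left h.1]

lemma clamp_lip {c : ℝ} (hc : 0 ≤ c) (z w : ℝ) : |clamp c z - clamp c w| ≤ |z - w| := by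
  rw [clamp_eq_maxmin hc, clamp_eq_maxmin hc]
  refine (abs_max_sub_max_le_abs _ _ _).trans ?_
  refine (abs_min_sub_min_le_max _ _ _ _).trans ?_
  rw [sub_self, abs_zero]
  exact max_le le_rfl (abs_nonneg _)

/-! ### Approximate multiplication -/

def pim (m : ℕ) (c a b : ℝ) : ℝ := c^2/4 * (FF m (|a+b|/c) - FF m (|a-b|/c))

lemma pim_err {c a b : ℝ} (m : ℕ) (hc : 0 < c) (h : |a| + |b| ≤ c) :
    |pim m c a b - a*b| ≤ c^2 / (16 * 4^m) := by
  set t1 := |a+b|/c with ht1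
  set t2 := |a-b|/c with ht2
  have h10 : 0 ≤ t1 := by positivity
  have h20 : 0 ≤ t2 := by positivity
  have h11 : t1 ≤ 1 := by
    rw [ht1, div_le_one hc]
    exact (abs_add_le a b).trans h
  have h21 : t2 ≤ 1 := by
    rw [ht2, div_le_one hc]
    exact (abs_sub a b).trans h
  have e1 := FF_err h10 h11 m
  have e2 := FF_err h20 h21 m
  have hsq : c^2/4 * (t1^2 - t2^2) = a * b := by
    rw [ht1, ht2, div_pow, div_pow, sq_abs, sq_abs]
    field_simp
    ring
  have hkey : pim m c a b - a*b = c^2/4 * ((FF m t1 - t1^2) - (FF m t2 - t2^2)) := by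
    rw [← hsq]; unfold pim; ring
  rw [hkey, abs_mul, abs_of_nonneg (by positivity : (0:ℝ) ≤ c^2/4)]
  have habs : |(FF m t1 - t1^2) - (FF m t2 - t2^2)| ≤ 1/(4*4^m) := by
    rw [abs_le]
    constructor <;> nlinarith [e1.1, e1.2, e2.1, e2.2]
  calc c^2/4 * |(FF m t1 - t1^2) - (FF m t2 - t2^2)| ≤ c^2/4 * (1/(4*4^m)) := by
        apply mul_le_mul_of_nonneg_left habs (by positivity)
    _ = c^2 / (16 * 4^m) := by ring

lemma pim_lip {c : ℝ} (m : ℕ) (hc : 0 < c) (a b a' b' : ℝ) :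
    |pim m c a b - pim m c a' b'| ≤ c * (|a - a'| + |b - b'|) := by
  set s := |a - a'| + |b - b'| with hs
  have hs0 : 0 ≤ s := by positivity
  have k1 : |(|a+b|/c - |a'+b'|/c)| ≤ s / c := by
    rw [div_sub_div_same, abs_div, abs_of_nonneg hc.le]
    gcongr
    calc |(|a+b| - |a'+b'|)| ≤ |(a+b) - (a'+b')| := abs_abs_sub_abs_le_abs_sub _ _
      _ = |(a-a') + (b-b')| := by rw [show (a+b) - (a'+b') = (a-a') + (b-b') by ring]
      _ ≤ s := abs_add_le _ _
  have k2 : |(|a-b|/c - |a'-b'|/c)| ≤ s / c := by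
    rw [div_sub_div_same, abs_div, abs_of_nonneg hc.le]
    gcongr
    calc |(|a-b| - |a'-b'|)| ≤ |(a-b) - (a'-b')| := abs_abs_sub_abs_le_abs_sub _ _
      _ = |(a-a') - (b-b')| := by rw [show (a-b) - (a'-b') = (a-a') - (b-b') by ring]
      _ ≤ |a-a'| + |b-b'| := abs_sub _ _
  have f1 : |FF m (|a+b|/c) - FF m (|a'+b'|/c)| ≤ 2*(s/c) := by
    refine (FF_lip m _ _).trans ?_; linarith
  have f2 : |FF m (|a-b|/c) - FF m (|a'-b'|/c)| ≤ 2*(s/c) := by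
    refine (FF_lip m _ _).trans ?_; linarith
  have key : pim m c a b - pim m c a' b' =
      c^2/4 * ((FF m (|a+b|/c) - FF m (|a'+b'|/c)) - (FF m (|a-b|/c) - FF m (|a'-b'|/c))) := by
    unfold pim; ring
  rw [key, abs_mul, abs_of_nonneg (by positivity : (0:ℝ) ≤ c^2/4)]
  have habs : |(FF m (|a+b|/c) - FF m (|a'+b'|/c)) - (FF m (|a-b|/c) - FF m (|a'-b'|/c))| ≤
      4*(s/c) := by
    refine (abs_sub _ _).trans ?_
    linarith
  calc c^2/4 * |(FF m (|a+b|/c) - FF m (|a'+b'|/c)) - (FF m (|a-b|/c) - FF m (|a'-b'|/c))|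
      ≤ c^2/4 * (4*(s/c)) := mul_le_mul_of_nonneg_left habs (by positivity)
    _ = c * s := by field_simp


/-! ### The iterated product approximation -/

def pseq (m : ℕ) (r : ℝ) (ξ : ℕ → ℝ) : ℕ → ℝ
  | 0 => ξ 0
  | s+1 => clamp (r^(s+2)) (pim m (r^(s+1) + r) (pseq m r ξ s) (ξ (s+1)))

variable {m : ℕ} {r : ℝ} {ξ ξ' : ℕ → ℝ}

lemma pseq_bound (hr : 1 ≤ r) (hx : ∀ j, |ξ j| ≤ r) :
    ∀ s, |pseq m r ξ s| ≤ r^(s+1)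
  | 0 => by simpa [pseq] using (hx 0).trans_eq (pow_one r).symm
  | s+1 => clamp_abs_le (by positivity) _

lemma pseq_err (hr : 1 ≤ r) (hx : ∀ j, |ξ j| ≤ r) :
    ∀ s, |pseq m r ξ s - ∏ j ∈ Finset.range (s+1), ξ j| ≤ s * r^(3*s) / (4 * 4^m)
  | 0 => by simp [pseq]
  | s+1 => by
    have hr0 : (0:ℝ) < r := lt_of_lt_of_le one_pos hr
    have ih := pseq_err hr hx s
    set C := r^(s+1) + r with hC
    have hCpos : (0:ℝ) < C := by positivity
    set p := pseq m r ξ s with hp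
    set P : ℝ := ∏ j ∈ Finset.range (s+1), ξ j with hP
    have hPb : |P * ξ (s+1)| ≤ r^(s+2) := by
      rw [abs_mul]
      have h1 : |P| ≤ r^(s+1) := by
        rw [hP, Finset.abs_prod]
        calc ∏ j ∈ Finset.range (s+1), |ξ j| ≤ ∏ j ∈ Finset.range (s+1), r :=
              Finset.prod_le_prod (fun j _ => abs_nonneg _) (fun j _ => hx j)
          _ = r^(s+1) := by rw [Finset.prod_const, Finset.card_range]
      calc |P| * |ξ (s+1)| ≤ r^(s+1) * r := by
            apply mul_le_mul h1 (hx (s+1)) (abs_nonneg _) (by positivity)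
        _ = r^(s+2) := by ring
    have hpe : |pim m C p (ξ (s+1)) - p * ξ (s+1)| ≤ C^2 / (16 * 4^m) :=
      pim_err m hCpos (by
        calc |p| + |ξ (s+1)| ≤ r^(s+1) + r := add_le_add (pseq_bound hr hx s) (hx (s+1))
          _ = C := hC.symm)
    have hprod : ∏ j ∈ Finset.range (s+2), ξ j = P * ξ (s+1) := by
      rw [hP, Finset.prod_range_succ]
    have hclamp : |pseq m r ξ (s+1) - P * ξ (s+1)| ≤ |pim m C p (ξ (s+1)) - P * ξ (s+1)| := by
      have := clamp_lip (by positivity : (0:ℝ) ≤ r^(s+2)) (pim m C p (ξ (s+1))) (P * ξ (s+1))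
      rw [clamp_of_abs_le hPb] at this
      simpa [pseq, ← hC, ← hp] using this
    have step : |pim m C p (ξ (s+1)) - P * ξ (s+1)| ≤ C^2/(16*4^m) + r * (s * r^(3*s) / (4*4^m)) := by
      have h2 : |p * ξ (s+1) - P * ξ (s+1)| ≤ r * (s * r^(3*s) / (4*4^m)) := by
        rw [show p * ξ (s+1) - P * ξ (s+1) = (p - P) * ξ (s+1) by ring, abs_mul, mul_comm]
        apply mul_le_mul (hx (s+1)) ih (abs_nonneg _) hr0.le
      calc |pim m C p (ξ (s+1)) - P * ξ (s+1)|
          ≤ |pim m C p (ξ (s+1)) - p * ξ (s+1)| + |p * ξ (s+1) - P * ξ (s+1)| := by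
            have := abs_sub_le (pim m C p (ξ (s+1))) (p * ξ (s+1)) (P * ξ (s+1)); linarith
        _ ≤ C^2/(16*4^m) + r * (s * r^(3*s) / (4*4^m)) := add_le_add hpe h2
    rw [hprod]
    refine hclamp.trans (step.trans ?_)
    have hC2 : C^2 ≤ 4 * r^(2*s+2) := by
      have h1 : r ≤ r^(s+1) := le_self_pow₀ hr (by omega)
      have h2 : C ≤ 2 * r^(s+1) := by rw [hC]; linarith
      calc C^2 ≤ (2*r^(s+1))^2 := by nlinarith
        _ = 4 * r^(2*s+2) := by ring
    have e1 : C^2/(16*4^m) ≤ r^(3*(s+1))/(4*4^m) := by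
      rw [div_le_div_iff₀ (by positivity) (by positivity)]
      have h3 : r^(2*s+2) ≤ r^(3*(s+1)) := pow_le_pow_right₀ hr (by omega)
      nlinarith [pow_pos (by norm_num : (0:ℝ) < 4) m]
    have e2 : r*((s:ℝ) * r^(3*s) / (4*4^m)) ≤ (s:ℝ) * r^(3*(s+1))/(4*4^m) := by
      rw [show r*((s:ℝ) * r^(3*s) / (4*4^m)) = (s:ℝ) * r^(3*s+1) / (4*4^m) by ring]
      have hb : (0:ℝ) < 4*4^m := by positivity
      rw [div_le_div_iff₀ hb hb]
      have h4 : r^(3*s+1) ≤ r^(3*(s+1)) := pow_le_pow_right₀ hr (by omega)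
      have h5 : (s:ℝ) * r^(3*s+1) ≤ (s:ℝ) * r^(3*(s+1)) :=
        mul_le_mul_of_nonneg_left h4 (Nat.cast_nonneg s)
      nlinarith
    calc C^2/(16*4^m) + r * ((s:ℝ) * r^(3*s) / (4*4^m))
        ≤ r^(3*(s+1))/(4*4^m) + (s:ℝ) * r^(3*(s+1))/(4*4^m) := add_le_add e1 e2
      _ = (↑(s+1)) * r^(3*(s+1)) / (4*4^m) := by push_cast; ring

lemma pseq_lip (hr : 1 ≤ r) (ξ ξ' : ℕ → ℝ) :
    ∀ s, |pseq m r ξ s - pseq m r ξ' s| ≤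
      (∏ i ∈ Finset.range s, (r^(i+1) + r)) * ∑ j ∈ Finset.range (s+1), |ξ j - ξ' j|
  | 0 => by simp [pseq]
  | s+1 => by
    have hr0 : (0:ℝ) < r := lt_of_lt_of_le one_pos hr
    have ih := pseq_lip hr ξ ξ' s
    set C := r^(s+1) + r with hC
    have hCpos : (0:ℝ) < C := by positivity
    set M : ℝ := ∏ i ∈ Finset.range s, (r^(i+1) + r) with hM
    have hM1 : (1:ℝ) ≤ M := by
      rw [hM]
      calc (1:ℝ) = ∏ _i ∈ Finset.range s, (1:ℝ) := by simp
        _ ≤ ∏ i ∈ Finset.range s, (r^(i+1) + r) := by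
            apply Finset.prod_le_prod (fun _ _ => zero_le_one)
            intro i _
            have : (1:ℝ) ≤ r^(i+1) := one_le_pow₀ hr
            linarith
    set S : ℝ := ∑ j ∈ Finset.range (s+1), |ξ j - ξ' j| with hS
    have hS0 : 0 ≤ S := Finset.sum_nonneg fun j _ => abs_nonneg _
    have h1 : |pseq m r ξ (s+1) - pseq m r ξ' (s+1)| ≤
        |pim m C (pseq m r ξ s) (ξ (s+1)) - pim m C (pseq m r ξ' s) (ξ' (s+1))| := by
      simpa [pseq, ← hC] using clamp_lip (by positivity : (0:ℝ) ≤ r^(s+2))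
        (pim m C (pseq m r ξ s) (ξ (s+1))) (pim m C (pseq m r ξ' s) (ξ' (s+1)))
    have h2 := pim_lip m hCpos (pseq m r ξ s) (ξ (s+1)) (pseq m r ξ' s) (ξ' (s+1))
    have h3 : |pseq m r ξ s - pseq m r ξ' s| + |ξ (s+1) - ξ' (s+1)| ≤
        M * (S + |ξ (s+1) - ξ' (s+1)|) := by
      have hd := abs_nonneg (ξ (s+1) - ξ' (s+1))
      nlinarith
    have hsum : ∑ j ∈ Finset.range (s+2), |ξ j - ξ' j| = S + |ξ (s+1) - ξ' (s+1)| := by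
      rw [hS, Finset.sum_range_succ]
    have hprod : ∏ i ∈ Finset.range (s+1), (r^(i+1) + r) = M * C := by
      rw [hM, hC, Finset.prod_range_succ]
    rw [hsum, hprod]
    calc |pseq m r ξ (s+1) - pseq m r ξ' (s+1)|
        ≤ C * (|pseq m r ξ s - pseq m r ξ' s| + |ξ (s+1) - ξ' (s+1)|) := h1.trans h2
      _ ≤ C * (M * (S + |ξ (s+1) - ξ' (s+1)|)) := by
          apply mul_le_mul_of_nonneg_left h3 hCpos.le
      _ = M * C * (S + |ξ (s+1) - ξ' (s+1)|) := by ring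


/-! ### Sparse rows and linear evaluation -/

def e1 (a : ℕ) (c : ℝ) : ℕ → ℝ := fun j => if j = a then c else 0
def e2 (a1 : ℕ) (c1 : ℝ) (a2 : ℕ) (c2 : ℝ) : ℕ → ℝ := fun j => e1 a1 c1 j + e1 a2 c2 j
def e3 (a1 : ℕ) (c1 : ℝ) (a2 : ℕ) (c2 : ℝ) (a3 : ℕ) (c3 : ℝ) : ℕ → ℝ :=
  fun j => e1 a1 c1 j + e1 a2 c2 j + e1 a3 c3 j
def e4 (a1 : ℕ) (c1 : ℝ) (a2 : ℕ) (c2 : ℝ) (a3 : ℕ) (c3 : ℝ) (a4 : ℕ) (c4 : ℝ) : ℕ → ℝ :=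
  fun j => e1 a1 c1 j + e1 a2 c2 j + e1 a3 c3 j + e1 a4 c4 j

def lin (n : ℕ) (ρ v : ℕ → ℝ) : ℝ := ∑ j ∈ Finset.range n, ρ j * v j

lemma lin_e1 {n a : ℕ} (h : a < n) (c : ℝ) (v : ℕ → ℝ) : lin n (e1 a c) v = c * v a := by
  unfold lin e1
  rw [Finset.sum_eq_single a]
  · simp
  · intro j _ hj; simp [hj]
  · intro ha; exact absurd (Finset.mem_range.mpr h) ha

lemma lin_add (n : ℕ) (ρ σ v : ℕ → ℝ) :
    lin n (fun j => ρ j + σ j) v = lin n ρ v + lin n σ v := by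
  unfold lin
  rw [← Finset.sum_add_distrib]
  exact Finset.sum_congr rfl fun j _ => by ring

lemma lin_zero (n : ℕ) (v : ℕ → ℝ) : lin n (fun _ => (0:ℝ)) v = 0 := by
  unfold lin; simp

lemma lin_e2 {n a1 a2 : ℕ} (h1 : a1 < n) (h2 : a2 < n) (c1 c2 : ℝ) (v : ℕ → ℝ) :
    lin n (e2 a1 c1 a2 c2) v = c1 * v a1 + c2 * v a2 := by
  unfold e2
  rw [lin_add, lin_e1 h1, lin_e1 h2]

lemma lin_e3 {n a1 a2 a3 : ℕ} (h1 : a1 < n) (h2 : a2 < n) (h3 : a3 < n)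
    (c1 c2 c3 : ℝ) (v : ℕ → ℝ) :
    lin n (e3 a1 c1 a2 c2 a3 c3) v = c1 * v a1 + c2 * v a2 + c3 * v a3 := by
  unfold e3
  rw [show (fun j => e1 a1 c1 j + e1 a2 c2 j + e1 a3 c3 j)
      = (fun j => (fun j' => e1 a1 c1 j' + e1 a2 c2 j') j + e1 a3 c3 j) from rfl,
    lin_add, lin_e1 h3]
  rw [show (fun j' => e1 a1 c1 j' + e1 a2 c2 j') = e2 a1 c1 a2 c2 from rfl, lin_e2 h1 h2]

lemma lin_e4 {n a1 a2 a3 a4 : ℕ} (h1 : a1 < n) (h2 : a2 < n) (h3 : a3 < n) (h4 : a4 < n)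
    (c1 c2 c3 c4 : ℝ) (v : ℕ → ℝ) :
    lin n (e4 a1 c1 a2 c2 a3 c3 a4 c4) v = c1 * v a1 + c2 * v a2 + c3 * v a3 + c4 * v a4 := by
  unfold e4
  rw [show (fun j => e1 a1 c1 j + e1 a2 c2 j + e1 a3 c3 j + e1 a4 c4 j)
      = (fun j => (fun j' => e1 a1 c1 j' + e1 a2 c2 j' + e1 a3 c3 j') j + e1 a4 c4 j) from rfl,
    lin_add, lin_e1 h4]
  rw [show (fun j' => e1 a1 c1 j' + e1 a2 c2 j' + e1 a3 c3 j') = e3 a1 c1 a2 c2 a3 c3 from rfl,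
    lin_e3 h1 h2 h3]

/-! ### The hidden state description -/

def St (d : ℕ) (ξ : ℕ → ℝ) (a₀ a₁ : ℝ) (sc : ℕ → ℝ) : ℕ → ℝ := fun i =>
  if i = 0 then a₀ else if i = 1 then a₁
  else if i < 2 + d then ReLU (ξ (i - 2))
  else if i < 2 + 2*d then ReLU (-ξ (i - 2 - d))
  else if i < 2 + 2*d + 8 then sc (i - (2 + 2*d))
  else 0

lemma St_0 (d : ℕ) (ξ : ℕ → ℝ) (a₀ a₁ : ℝ) (sc : ℕ → ℝ) : St d ξ a₀ a₁ sc 0 = a₀ := rfl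

lemma St_1 (d : ℕ) (ξ : ℕ → ℝ) (a₀ a₁ : ℝ) (sc : ℕ → ℝ) : St d ξ a₀ a₁ sc 1 = a₁ := rfl

lemma St_x (d : ℕ) (ξ : ℕ → ℝ) (a₀ a₁ : ℝ) (sc : ℕ → ℝ) {j : ℕ} (h : j < d) :
    St d ξ a₀ a₁ sc (2 + j) = ReLU (ξ j) := by
  unfold St
  rw [if_neg (by omega), if_neg (by omega), if_pos (by omega)]
  congr 2
  omega

lemma St_y (d : ℕ) (ξ : ℕ → ℝ) (a₀ a₁ : ℝ) (sc : ℕ → ℝ) {j : ℕ} (h : j < d) :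
    St d ξ a₀ a₁ sc (2 + d + j) = ReLU (-ξ j) := by
  unfold St
  rw [if_neg (by omega), if_neg (by omega), if_neg (by omega), if_pos (by omega)]
  congr 3
  omega

lemma St_sc (d : ℕ) (ξ : ℕ → ℝ) (a₀ a₁ : ℝ) (sc : ℕ → ℝ) {c : ℕ} (h : c < 8) :
    St d ξ a₀ a₁ sc (2 + 2*d + c) = sc c := by
  unfold St
  rw [if_neg (by omega), if_neg (by omega), if_neg (by omega), if_neg (by omega),
    if_pos (by omega)]
  congr 1
  omega

def sc8 (v0 v1 v2 v3 v4 v5 v6 v7 : ℝ) : ℕ → ℝ := fun c =>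
  if c = 0 then v0 else if c = 1 then v1 else if c = 2 then v2 else if c = 3 then v3
  else if c = 4 then v4 else if c = 5 then v5 else if c = 6 then v6 else if c = 7 then v7
  else 0

lemma St_congr (d : ℕ) (ξ : ℕ → ℝ) {a₀ a₁ a₀' a₁' : ℝ} {sc sc' : ℕ → ℝ}
    (h0 : a₀ = a₀') (h1 : a₁ = a₁') (h : ∀ c < 8, sc c = sc' c) :
    St d ξ a₀ a₁ sc = St d ξ a₀' a₁' sc' := by
  funext i
  unfold St
  by_cases c0 : i = 0
  · simp [c0, h0]
  by_cases c1 : i = 1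
  · simp [c0, c1, h1]
  by_cases c2 : i < 2 + d
  · simp [c0, c1, c2]
  by_cases c3 : i < 2 + 2*d
  · simp [c0, c1, c2, c3]
  by_cases c4 : i < 2 + 2*d + 8
  · simp only [if_neg c0, if_neg c1, if_neg c2, if_neg c3, if_pos c4]
    exact h _ (by omega)
  · simp [c0, c1, c2, c3, c4]

/-! ### Layer templates -/

def stV (d : ℕ) (w : ℕ → ℕ → ℝ) : ℕ → ℕ → ℝ := fun i j =>
  if i < 2 then w i j
  else if i < 2 + 2*d then (if j = i then 1 else 0)
  else if i < 2 + 2*d + 8 then w (i - 2*d) j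
  else 0

def stB (d : ℕ) (β : ℕ → ℝ) : ℕ → ℝ := fun i =>
  if i < 2 then β i
  else if i < 2 + 2*d then 0
  else if i < 2 + 2*d + 8 then β (i - 2*d)
  else 0

lemma step (d : ℕ) (ξ : ℕ → ℝ) (a₀ a₁ : ℝ) (sc : ℕ → ℝ) (w : ℕ → ℕ → ℝ) (β : ℕ → ℝ) :
    (fun i => ReLU ((∑ j ∈ Finset.range (2+2*d+8), stV d w i j * St d ξ a₀ a₁ sc j) + stB d β i))
      = St d ξ (ReLU (lin (2+2*d+8) (w 0) (St d ξ a₀ a₁ sc) + β 0))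
          (ReLU (lin (2+2*d+8) (w 1) (St d ξ a₀ a₁ sc) + β 1))
          (fun c => ReLU (lin (2+2*d+8) (w (2+c)) (St d ξ a₀ a₁ sc) + β (2+c))) := by
  funext i
  set v := St d ξ a₀ a₁ sc with hv
  by_cases c0 : i = 0
  · subst c0
    have hrow : ∀ j, stV d w 0 j = w 0 j := fun j => by unfold stV; rw [if_pos (by omega)]
    have hb : stB d β 0 = β 0 := by unfold stB; rw [if_pos (by omega)]
    simp only [hrow, hb, St_0, lin]
  by_cases c1 : i = 1
  · subst c1
    have hrow : ∀ j, stV d w 1 j = w 1 j := fun j => by unfold stV; rw [if_pos (by omega)]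
    have hb : stB d β 1 = β 1 := by unfold stB; rw [if_pos (by omega)]
    simp only [hrow, hb, St_1, lin]
  by_cases c2 : i < 2 + 2*d
  · -- carried input channels
    have hrow : ∀ j, stV d w i j = e1 i (1:ℝ) j := fun j => by
      unfold stV e1
      rw [if_neg (by omega), if_pos (by omega)]
    have hb : stB d β i = 0 := by unfold stB; rw [if_neg (by omega), if_pos (by omega)]
    have hsum : (∑ j ∈ Finset.range (2+2*d+8), stV d w i j * v j) = v i := by
      rw [show (∑ j ∈ Finset.range (2+2*d+8), stV d w i j * v j)
          = lin (2+2*d+8) (e1 i 1) v from Finset.sum_congr rfl fun j _ => by rw [hrow],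
        lin_e1 (by omega), one_mul]
    rw [hsum, hb, add_zero]
    by_cases c3 : i < 2 + d
    · rw [hv]
      unfold St
      rw [if_neg c0, if_neg c1, if_pos c3, if_neg c0, if_neg c1, if_pos c3, relu_relu]
    · rw [hv]
      unfold St
      rw [if_neg c0, if_neg c1, if_neg c3, if_pos c2, if_neg c0, if_neg c1, if_neg c3,
        if_pos c2, relu_relu]
  by_cases c4 : i < 2 + 2*d + 8
  · have hrow : ∀ j, stV d w i j = w (i - 2*d) j := fun j => by
      unfold stV; rw [if_neg (by omega), if_neg (by omega), if_pos (by omega)]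
    have hb : stB d β i = β (i - 2*d) := by
      unfold stB; rw [if_neg (by omega), if_neg (by omega), if_pos (by omega)]
    have hsum : (∑ j ∈ Finset.range (2+2*d+8), stV d w i j * v j)
        = lin (2+2*d+8) (w (i - 2*d)) v := Finset.sum_congr rfl fun j _ => by rw [hrow]
    rw [hsum, hb]
    have hst : St d ξ (ReLU (lin (2+2*d+8) (w 0) v + β 0)) (ReLU (lin (2+2*d+8) (w 1) v + β 1))
        (fun c => ReLU (lin (2+2*d+8) (w (2+c)) v + β (2+c))) i
        = ReLU (lin (2+2*d+8) (w (2 + (i - (2+2*d)))) v + β (2 + (i - (2+2*d)))) := by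
      unfold St
      rw [if_neg c0, if_neg c1, if_neg (by omega), if_neg (by omega), if_pos (by omega)]
    rw [hst]
    have : 2 + (i - (2+2*d)) = i - 2*d := by omega
    rw [this]
  · have hrow : ∀ j, stV d w i j = 0 := fun j => by
      unfold stV; rw [if_neg (by omega), if_neg (by omega), if_neg (by omega)]
    have hb : stB d β i = 0 := by
      unfold stB; rw [if_neg (by omega), if_neg (by omega), if_neg (by omega)]
    have hsum : (∑ j ∈ Finset.range (2+2*d+8), stV d w i j * v j) = 0 := by
      rw [Finset.sum_eq_zero]
      intro j _; rw [hrow, zero_mul]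
    rw [hsum, hb, add_zero, relu_zero]
    unfold St
    rw [if_neg c0, if_neg c1, if_neg (by omega), if_neg (by omega), if_neg (by omega)]


/-! ### Layer data -/

def bZero : ℕ → ℝ := fun _ => 0

def wL0 (xp xm : ℕ) (C : ℝ) : ℕ → ℕ → ℝ := fun n =>
  if n = 2 then e4 0 (1/C) 1 (-(1/C)) xp (1/C) xm (-(1/C))
  else if n = 3 then e4 0 (-(1/C)) 1 (1/C) xp (-(1/C)) xm (1/C)
  else if n = 6 then e4 0 (1/C) 1 (-(1/C)) xp (-(1/C)) xm (1/C)
  else if n = 7 then e4 0 (-(1/C)) 1 (1/C) xp (1/C) xm (-(1/C))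
  else fun _ => 0

def wL1 (d : ℕ) : ℕ → ℕ → ℝ := fun n =>
  if n = 2 ∨ n = 3 ∨ n = 4 ∨ n = 5 then e2 (2+2*d+0) 1 (2+2*d+1) 1
  else if n = 6 ∨ n = 7 ∨ n = 8 ∨ n = 9 then e2 (2+2*d+4) 1 (2+2*d+5) 1
  else fun _ => 0

def bT : ℕ → ℝ := fun n =>
  if n = 3 ∨ n = 7 then -(1/2) else if n = 4 ∨ n = 8 then -1 else 0

def wIt (d : ℕ) (q : ℝ) : ℕ → ℕ → ℝ := fun n =>
  if n = 2 ∨ n = 3 ∨ n = 4 then e3 (2+2*d+0) 2 (2+2*d+1) (-4) (2+2*d+2) 2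
  else if n = 5 then e4 (2+2*d+0) (-(2*q)) (2+2*d+1) (4*q) (2+2*d+2) (-(2*q)) (2+2*d+3) 1
  else if n = 6 ∨ n = 7 ∨ n = 8 then e3 (2+2*d+4) 2 (2+2*d+5) (-4) (2+2*d+6) 2
  else if n = 9 then e4 (2+2*d+4) (-(2*q)) (2+2*d+5) (4*q) (2+2*d+6) (-(2*q)) (2+2*d+7) 1
  else fun _ => 0

def wPi (d : ℕ) (c4 : ℝ) : ℕ → ℕ → ℝ := fun n =>
  if n = 0 ∨ n = 1 then e2 (2+2*d+3) c4 (2+2*d+7) (-c4)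
  else fun _ => 0

def bPi (C' : ℝ) : ℕ → ℝ := fun n => if n = 0 then C' else if n = 1 then -C' else 0

def wRe : ℕ → ℕ → ℝ := fun n =>
  if n = 0 then e2 0 1 1 (-1) else if n = 1 then e2 0 (-1) 1 1 else fun _ => 0

def bRe (C' : ℝ) : ℕ → ℝ := fun n => if n = 0 then -C' else if n = 1 then C' else 0

def ww (d m : ℕ) (r : ℝ) (s o : ℕ) : ℕ → ℕ → ℝ :=
  if o = 0 then wL0 (2+(s+1)) (2+d+(s+1)) (r^(s+1)+r)
  else if o = 1 then wL1 d
  else if o ≤ m+1 then wIt d ((1/4)^(o-1))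
  else if o = m+2 then wPi d ((r^(s+1)+r)^2/4)
  else wRe

def bb (m : ℕ) (r : ℝ) (s o : ℕ) : ℕ → ℝ :=
  if o = 0 then bZero
  else if o = 1 then bT
  else if o ≤ m+1 then bT
  else if o = m+2 then bPi (r^(s+2))
  else bRe (r^(s+2))

def inV (d : ℕ) : ℕ → ℕ → ℝ := fun i =>
  if i = 0 then e1 0 1
  else if i = 1 then e1 0 (-1)
  else if i < 2 + d then e1 (i-2) 1
  else if i < 2 + 2*d then e1 (i-2-d) (-1)
  else fun _ => 0

def outV : ℕ → ℕ → ℝ := fun i => if i = 0 then e2 0 1 1 (-1) else fun _ => 0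

def net (d m : ℕ) (r : ℝ) : NN where
  Dm := 1 + (d-1)*(m+4)
  l := fun k => if k = 0 then d else if k ≤ 1 + (d-1)*(m+4) then 2+2*d+8 else 1
  V := fun k =>
    if k = 0 then inV d
    else if k ≤ (d-1)*(m+4) then stV d (ww d m r ((k-1)/(m+4)) ((k-1) % (m+4)))
    else outV
  b := fun k =>
    if k = 0 then bZero
    else if k ≤ (d-1)*(m+4) then stB d (bb m r ((k-1)/(m+4)) ((k-1) % (m+4)))
    else bZero

lemma net_decode (d m : ℕ) (r : ℝ) {s o : ℕ} (hs : s ≤ d-2) (ho : o ≤ m+3) (hd : 2 ≤ d) :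
    (net d m r).V (1 + s*(m+4) + o) = stV d (ww d m r s o) ∧
    (net d m r).b (1 + s*(m+4) + o) = stB d (bb m r s o) ∧
    (net d m r).l (1 + s*(m+4) + o) = 2+2*d+8 := by
  have hmul : s*(m+4) + (m+4) ≤ (d-1)*(m+4) := by
    have h1 : s + 1 ≤ d - 1 := by omega
    calc s*(m+4) + (m+4) = (s+1)*(m+4) := by ring
      _ ≤ (d-1)*(m+4) := Nat.mul_le_mul_right _ h1
  have hk : 1 + s*(m+4) + o ≤ (d-1)*(m+4) := by omega
  have hk0 : ¬(1 + s*(m+4) + o = 0) := by omega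
  have hdiv : (1 + s*(m+4) + o - 1) / (m+4) = s := by
    have : 1 + s*(m+4) + o - 1 = (m+4)*s + o := by ring_nf; omega
    rw [this, Nat.mul_add_div (by omega), Nat.div_eq_of_lt (by omega)]
    omega
  have hmod : (1 + s*(m+4) + o - 1) % (m+4) = o := by
    have : 1 + s*(m+4) + o - 1 = (m+4)*s + o := by ring_nf; omega
    rw [this, Nat.mul_add_mod, Nat.mod_eq_of_lt (by omega)]
  refine ⟨?_, ?_, ?_⟩
  · show (if 1 + s*(m+4) + o = 0 then _ else if 1 + s*(m+4) + o ≤ (d-1)*(m+4) then _ else _) = _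
    rw [if_neg hk0, if_pos hk, hdiv, hmod]
  · show (if 1 + s*(m+4) + o = 0 then _ else if 1 + s*(m+4) + o ≤ (d-1)*(m+4) then _ else _) = _
    rw [if_neg hk0, if_pos hk, hdiv, hmod]
  · show (if 1 + s*(m+4) + o = 0 then d else if 1 + s*(m+4) + o ≤ 1 + (d-1)*(m+4) then 2+2*d+8 else 1) = _
    rw [if_neg hk0, if_pos (by omega)]

lemma lin_row4 (d : ℕ) (x : ℕ → ℝ) (a₀ a₁ : ℝ) (sc : ℕ → ℝ) {j : ℕ} (hj : j < d)
    (c1 c2 c3 c4 : ℝ) :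
    lin (2+2*d+8) (e4 0 c1 1 c2 (2+j) c3 (2+d+j) c4) (St d x a₀ a₁ sc)
      = c1 * a₀ + c2 * a₁ + c3 * ReLU (x j) + c4 * ReLU (-x j) := by
  rw [lin_e4 (by omega) (by omega) (by omega) (by omega), St_0, St_1,
    St_x _ _ _ _ _ hj, St_y _ _ _ _ _ hj]

lemma lin_01 (d : ℕ) (x : ℕ → ℝ) (a₀ a₁ : ℝ) (sc : ℕ → ℝ) (k1 k2 : ℝ) :
    lin (2+2*d+8) (e2 0 k1 1 k2) (St d x a₀ a₁ sc) = k1 * a₀ + k2 * a₁ := by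
  rw [lin_e2 (by omega) (by omega), St_0, St_1]

lemma lin_sc2 (d : ℕ) (x : ℕ → ℝ) (a₀ a₁ : ℝ) (sc : ℕ → ℝ) {n1 n2 : ℕ}
    (h1 : n1 < 8) (h2 : n2 < 8) (k1 k2 : ℝ) :
    lin (2+2*d+8) (e2 (2+2*d+n1) k1 (2+2*d+n2) k2) (St d x a₀ a₁ sc)
      = k1 * sc n1 + k2 * sc n2 := by
  rw [lin_e2 (by omega) (by omega), St_sc _ _ _ _ _ h1, St_sc _ _ _ _ _ h2]

lemma lin_sc3 (d : ℕ) (x : ℕ → ℝ) (a₀ a₁ : ℝ) (sc : ℕ → ℝ) {n1 n2 n3 : ℕ}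
    (h1 : n1 < 8) (h2 : n2 < 8) (h3 : n3 < 8) (k1 k2 k3 : ℝ) :
    lin (2+2*d+8) (e3 (2+2*d+n1) k1 (2+2*d+n2) k2 (2+2*d+n3) k3) (St d x a₀ a₁ sc)
      = k1 * sc n1 + k2 * sc n2 + k3 * sc n3 := by
  rw [lin_e3 (by omega) (by omega) (by omega), St_sc _ _ _ _ _ h1, St_sc _ _ _ _ _ h2,
    St_sc _ _ _ _ _ h3]

lemma lin_sc4 (d : ℕ) (x : ℕ → ℝ) (a₀ a₁ : ℝ) (sc : ℕ → ℝ) {n1 n2 n3 n4 : ℕ}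
    (h1 : n1 < 8) (h2 : n2 < 8) (h3 : n3 < 8) (h4 : n4 < 8) (k1 k2 k3 k4 : ℝ) :
    lin (2+2*d+8) (e4 (2+2*d+n1) k1 (2+2*d+n2) k2 (2+2*d+n3) k3 (2+2*d+n4) k4)
      (St d x a₀ a₁ sc) = k1 * sc n1 + k2 * sc n2 + k3 * sc n3 + k4 * sc n4 := by
  rw [lin_e4 (by omega) (by omega) (by omega) (by omega), St_sc _ _ _ _ _ h1,
    St_sc _ _ _ _ _ h2, St_sc _ _ _ _ _ h3, St_sc _ _ _ _ _ h4]

lemma step_apply (d m : ℕ) (r : ℝ) {s o : ℕ} (hs : s ≤ d-2) (ho : o ≤ m+3) (hd : 2 ≤ d)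
    (x : ℕ → ℝ) (a₀ a₁ : ℝ) (sc : ℕ → ℝ)
    (H : (net d m r).hidden ReLU (1 + s*(m+4) + o) x = St d x a₀ a₁ sc) :
    (net d m r).hidden ReLU (1 + s*(m+4) + o + 1) x
      = St d x (ReLU (lin (2+2*d+8) (ww d m r s o 0) (St d x a₀ a₁ sc) + bb m r s o 0))
          (ReLU (lin (2+2*d+8) (ww d m r s o 1) (St d x a₀ a₁ sc) + bb m r s o 1))
          (fun c => ReLU (lin (2+2*d+8) (ww d m r s o (2+c)) (St d x a₀ a₁ sc)
            + bb m r s o (2+c))) := by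
  obtain ⟨hV, hb, hl⟩ := net_decode d m r hs ho hd
  funext i
  show ReLU ((net d m r).aff (1 + s*(m+4) + o)
      ((net d m r).hidden ReLU (1 + s*(m+4) + o) x) i) = _
  rw [H]
  unfold NN.aff
  rw [hV, hb, hl]
  exact congrFun (step d x a₀ a₁ sc (ww d m r s o) (bb m r s o)) i

lemma hidden_one (d m : ℕ) (r : ℝ) (hd : 2 ≤ d) (x : ℕ → ℝ) :
    (net d m r).hidden ReLU 1 x = St d x (ReLU (x 0)) (ReLU (-x 0)) (fun _ => 0) := by
  have hV : (net d m r).V 0 = inV d := by norm_num [net]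
  have hb : (net d m r).b 0 = bZero := by norm_num [net]
  have hl : (net d m r).l 0 = d := by norm_num [net]
  funext i
  show ReLU ((net d m r).aff 0 ((net d m r).hidden ReLU 0 x) i) = _
  have hkey : (net d m r).aff 0 ((net d m r).hidden ReLU 0 x) i = lin d (inV d i) x := by
    unfold NN.aff
    rw [hV, hb, hl]
    show (∑ j ∈ Finset.range d, inV d i j * x j) + bZero i = lin d (inV d i) x
    rw [show bZero i = 0 from rfl, add_zero]
    rfl
  rw [hkey]
  by_cases c0 : i = 0
  · subst c0
    rw [show inV d 0 = e1 0 1 from rfl, lin_e1 (by omega), one_mul, St_0]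
  by_cases c1 : i = 1
  · subst c1
    rw [show inV d 1 = e1 0 (-1) from by norm_num [inV], lin_e1 (by omega), St_1]
    congr 1; ring
  by_cases c2 : i < 2 + d
  · have hrow : inV d i = e1 (i-2) 1 := by
      unfold inV; rw [if_neg c0, if_neg c1, if_pos c2]
    rw [hrow, lin_e1 (by omega), one_mul]
    unfold St
    rw [if_neg c0, if_neg c1, if_pos c2]
  by_cases c3 : i < 2 + 2*d
  · have hrow : inV d i = e1 (i-2-d) (-1) := by
      unfold inV; rw [if_neg c0, if_neg c1, if_neg c2, if_pos c3]
    rw [hrow, lin_e1 (by omega)]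
    unfold St
    rw [if_neg c0, if_neg c1, if_neg c2, if_pos c3]
    congr 1; ring
  · have hrow : inV d i = fun _ => (0:ℝ) := by
      unfold inV; rw [if_neg c0, if_neg c1, if_neg c2, if_neg c3]
    rw [hrow, lin_zero, relu_zero]
    unfold St
    rw [if_neg c0, if_neg c1, if_neg c2, if_neg c3]
    by_cases c4 : i < 2 + 2*d + 8
    · rw [if_pos c4]
    · rw [if_neg c4]

lemma stage (d m : ℕ) (r : ℝ) (hd : 2 ≤ d) (hr : 1 ≤ r) {s : ℕ} (hs : s ≤ d-2) (x : ℕ → ℝ)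
    (H : (net d m r).hidden ReLU (1 + s*(m+4)) x
        = St d x (ReLU (pseq m r x s)) (ReLU (-pseq m r x s)) (fun _ => 0)) :
    (net d m r).hidden ReLU (1 + (s+1)*(m+4)) x
      = St d x (ReLU (pseq m r x (s+1))) (ReLU (-pseq m r x (s+1))) (fun _ => 0) := by
  have hr0 : (0:ℝ) < r := lt_of_lt_of_le one_pos hr
  have hsd : s + 1 < d := by omega
  set C : ℝ := r^(s+1) + r with hC
  have hC0 : (0:ℝ) < C := by rw [hC]; positivity
  set p : ℝ := pseq m r x s with hp
  set za : ℝ := (p + x (s+1))/C with hza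
  set zb : ℝ := (p - x (s+1))/C with hzb
  set ta : ℝ := |za| with hta
  set tb : ℝ := |zb| with htb
  have hta0 : 0 ≤ ta := abs_nonneg _
  have htb0 : 0 ≤ tb := abs_nonneg _
  have eg1 := relu_sub_relu_neg p
  have eg2 := relu_sub_relu_neg (x (s+1))
  -- Layer o = 0
  have H1 : (net d m r).hidden ReLU (1 + s*(m+4) + 1) x
      = St d x 0 0 (sc8 (ReLU za) (ReLU (-za)) 0 0 (ReLU zb) (ReLU (-zb)) 0 0) := by
    have h := step_apply d m r hs (show (0:ℕ) ≤ m+3 by omega) hd x _ _ _ H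
    rw [h]
    have hww : ww d m r s 0 = wL0 (2+(s+1)) (2+d+(s+1)) C := by rw [ww, if_pos rfl]
    have hbb : bb m r s 0 = bZero := by rw [bb, if_pos rfl]
    rw [hww, hbb]
    apply St_congr
    · rw [show wL0 (2+(s+1)) (2+d+(s+1)) C 0 = fun _ => (0:ℝ) from by norm_num [wL0], lin_zero]
      show ReLU (0 + 0) = 0
      rw [add_zero, relu_zero]
    · rw [show wL0 (2+(s+1)) (2+d+(s+1)) C 1 = fun _ => (0:ℝ) from by norm_num [wL0], lin_zero]
      show ReLU (0 + 0) = 0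
      rw [add_zero, relu_zero]
    · intro c hc
      interval_cases c
      · rw [show wL0 (2+(s+1)) (2+d+(s+1)) C (2+0)
            = e4 0 (1/C) 1 (-(1/C)) (2+(s+1)) (1/C) (2+d+(s+1)) (-(1/C)) from by norm_num [wL0],
          lin_row4 d x _ _ _ (show s+1 < d from hsd)]
        show ReLU (_ + (0:ℝ)) = ReLU za
        congr 1
        rw [hza]
        linear_combination eg1/C + eg2/C
      · rw [show wL0 (2+(s+1)) (2+d+(s+1)) C (2+1)
            = e4 0 (-(1/C)) 1 (1/C) (2+(s+1)) (-(1/C)) (2+d+(s+1)) (1/C) from by norm_num [wL0],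
          lin_row4 d x _ _ _ (show s+1 < d from hsd)]
        show ReLU (_ + (0:ℝ)) = ReLU (-za)
        congr 1
        rw [hza]
        linear_combination -eg1/C - eg2/C
      · rw [show wL0 (2+(s+1)) (2+d+(s+1)) C (2+2) = fun _ => (0:ℝ) from by norm_num [wL0],
          lin_zero]
        show ReLU (0 + 0) = 0
        rw [add_zero, relu_zero]
      · rw [show wL0 (2+(s+1)) (2+d+(s+1)) C (2+3) = fun _ => (0:ℝ) from by norm_num [wL0],
          lin_zero]
        show ReLU (0 + 0) = 0
        rw [add_zero, relu_zero]
      · rw [show wL0 (2+(s+1)) (2+d+(s+1)) C (2+4)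
            = e4 0 (1/C) 1 (-(1/C)) (2+(s+1)) (-(1/C)) (2+d+(s+1)) (1/C) from by norm_num [wL0],
          lin_row4 d x _ _ _ (show s+1 < d from hsd)]
        show ReLU (_ + (0:ℝ)) = ReLU zb
        congr 1
        rw [hzb]
        linear_combination eg1/C - eg2/C
      · rw [show wL0 (2+(s+1)) (2+d+(s+1)) C (2+5)
            = e4 0 (-(1/C)) 1 (1/C) (2+(s+1)) (1/C) (2+d+(s+1)) (-(1/C)) from by norm_num [wL0],
          lin_row4 d x _ _ _ (show s+1 < d from hsd)]
        show ReLU (_ + (0:ℝ)) = ReLU (-zb)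
        congr 1
        rw [hzb]
        linear_combination -eg1/C + eg2/C
      · rw [show wL0 (2+(s+1)) (2+d+(s+1)) C (2+6) = fun _ => (0:ℝ) from by norm_num [wL0],
          lin_zero]
        show ReLU (0 + 0) = 0
        rw [add_zero, relu_zero]
      · rw [show wL0 (2+(s+1)) (2+d+(s+1)) C (2+7) = fun _ => (0:ℝ) from by norm_num [wL0],
          lin_zero]
        show ReLU (0 + 0) = 0
        rw [add_zero, relu_zero]
  set IS : ℕ → ℕ → ℝ := fun j => sc8 (ReLU (gg^[j] ta)) (ReLU (gg^[j] ta - 1/2))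
      (ReLU (gg^[j] ta - 1)) (FF j ta) (ReLU (gg^[j] tb)) (ReLU (gg^[j] tb - 1/2))
      (ReLU (gg^[j] tb - 1)) (FF j tb) with hIS
  have ha := relu_add_relu_neg za
  have hb' := relu_add_relu_neg zb
  -- Layer o = 1
  have H2 : (net d m r).hidden ReLU (1 + s*(m+4) + 2) x = St d x 0 0 (IS 0) := by
    have h := step_apply d m r hs (show (1:ℕ) ≤ m+3 by omega) hd x _ _ _ H1
    rw [h]
    have hww : ww d m r s 1 = wL1 d := by rw [ww, if_neg (by omega), if_pos rfl]
    have hbb : bb m r s 1 = bT := by rw [bb, if_neg (by omega), if_pos rfl]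
    rw [hww, hbb]
    apply St_congr
    · rw [show wL1 d 0 = fun _ => (0:ℝ) from by norm_num [wL1], lin_zero]
      show ReLU (0 + 0) = 0
      rw [add_zero, relu_zero]
    · rw [show wL1 d 1 = fun _ => (0:ℝ) from by norm_num [wL1], lin_zero]
      show ReLU (0 + 0) = 0
      rw [add_zero, relu_zero]
    · intro c hc
      interval_cases c
      · rw [show wL1 d (2+0) = e2 (2+2*d+0) 1 (2+2*d+1) 1 from by norm_num [wL1],
          lin_sc2 d x _ _ _ (by omega) (by omega)]
        show ReLU (1 * ReLU za + 1 * ReLU (-za) + (0:ℝ)) = ReLU (gg^[0] ta)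
        rw [Function.iterate_zero_apply]
        congr 1
        rw [hta]
        linarith [ha]
      · rw [show wL1 d (2+1) = e2 (2+2*d+0) 1 (2+2*d+1) 1 from by norm_num [wL1],
          lin_sc2 d x _ _ _ (by omega) (by omega)]
        show ReLU (1 * ReLU za + 1 * ReLU (-za) + (-(1/2):ℝ)) = ReLU (gg^[0] ta - 1/2)
        rw [Function.iterate_zero_apply]
        congr 1
        rw [hta]
        linarith [ha]
      · rw [show wL1 d (2+2) = e2 (2+2*d+0) 1 (2+2*d+1) 1 from by norm_num [wL1],
          lin_sc2 d x _ _ _ (by omega) (by omega)]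
        show ReLU (1 * ReLU za + 1 * ReLU (-za) + (-1:ℝ)) = ReLU (gg^[0] ta - 1)
        rw [Function.iterate_zero_apply]
        congr 1
        rw [hta]
        linarith [ha]
      · rw [show wL1 d (2+3) = e2 (2+2*d+0) 1 (2+2*d+1) 1 from by norm_num [wL1],
          lin_sc2 d x _ _ _ (by omega) (by omega)]
        show ReLU (1 * ReLU za + 1 * ReLU (-za) + (0:ℝ)) = FF 0 ta
        rw [FF_zero]
        have hv : 1 * ReLU za + 1 * ReLU (-za) + (0:ℝ) = ta := by rw [hta]; linarith [ha]
        rw [hv]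
        exact relu_of_nonneg hta0
      · rw [show wL1 d (2+4) = e2 (2+2*d+4) 1 (2+2*d+5) 1 from by norm_num [wL1],
          lin_sc2 d x _ _ _ (by omega) (by omega)]
        show ReLU (1 * ReLU zb + 1 * ReLU (-zb) + (0:ℝ)) = ReLU (gg^[0] tb)
        rw [Function.iterate_zero_apply]
        congr 1
        rw [htb]
        linarith [hb']
      · rw [show wL1 d (2+5) = e2 (2+2*d+4) 1 (2+2*d+5) 1 from by norm_num [wL1],
          lin_sc2 d x _ _ _ (by omega) (by omega)]
        show ReLU (1 * ReLU zb + 1 * ReLU (-zb) + (-(1/2):ℝ)) = ReLU (gg^[0] tb - 1/2)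
        rw [Function.iterate_zero_apply]
        congr 1
        rw [htb]
        linarith [hb']
      · rw [show wL1 d (2+6) = e2 (2+2*d+4) 1 (2+2*d+5) 1 from by norm_num [wL1],
          lin_sc2 d x _ _ _ (by omega) (by omega)]
        show ReLU (1 * ReLU zb + 1 * ReLU (-zb) + (-1:ℝ)) = ReLU (gg^[0] tb - 1)
        rw [Function.iterate_zero_apply]
        congr 1
        rw [htb]
        linarith [hb']
      · rw [show wL1 d (2+7) = e2 (2+2*d+4) 1 (2+2*d+5) 1 from by norm_num [wL1],
          lin_sc2 d x _ _ _ (by omega) (by omega)]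
        show ReLU (1 * ReLU zb + 1 * ReLU (-zb) + (0:ℝ)) = FF 0 tb
        rw [FF_zero]
        have hv : 1 * ReLU zb + 1 * ReLU (-zb) + (0:ℝ) = tb := by rw [htb]; linarith [hb']
        rw [hv]
        exact relu_of_nonneg htb0
  -- iteration layers
  have HIt : ∀ j, j ≤ m →
      (net d m r).hidden ReLU (1 + s*(m+4) + (2+j)) x = St d x 0 0 (IS j) := by
    intro j
    induction j with
    | zero => intro _; exact H2
    | succ n ih =>
      intro hn1
      have Hn := ih (by omega)
      have h := step_apply d m r hs (show 2+n ≤ m+3 by omega) hd x _ _ _ Hn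
      have hidx : 1 + s*(m+4) + (2+n) + 1 = 1 + s*(m+4) + (2+(n+1)) := by omega
      rw [hidx] at h
      rw [h]
      have hww : ww d m r s (2+n) = wIt d ((1/4)^(n+1)) := by
        rw [ww, if_neg (by omega), if_neg (by omega), if_pos (by omega),
          show 2+n-1 = n+1 from by omega]
      have hbb : bb m r s (2+n) = bT := by
        rw [bb, if_neg (by omega), if_neg (by omega), if_pos (by omega)]
      rw [hww, hbb]
      have hITa : gg^[n+1] ta = gg (gg^[n] ta) := Function.iterate_succ_apply' _ _ _
      have hITb : gg^[n+1] tb = gg (gg^[n] tb) := Function.iterate_succ_apply' _ _ _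
      have hgga : (2:ℝ) * ReLU (gg^[n] ta) + (-4) * ReLU (gg^[n] ta - 1/2)
          + 2 * ReLU (gg^[n] ta - 1) = gg^[n+1] ta := by
        rw [hITa]; unfold gg; ring
      have hggb : (2:ℝ) * ReLU (gg^[n] tb) + (-4) * ReLU (gg^[n] tb - 1/2)
          + 2 * ReLU (gg^[n] tb - 1) = gg^[n+1] tb := by
        rw [hITb]; unfold gg; ring
      have hq4 : ((1:ℝ)/4)^(n+1) = 1/4^(n+1) := by rw [div_pow, one_pow]
      have hISn : ∀ k, IS n k = sc8 (ReLU (gg^[n] ta)) (ReLU (gg^[n] ta - 1/2))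
          (ReLU (gg^[n] ta - 1)) (FF n ta) (ReLU (gg^[n] tb)) (ReLU (gg^[n] tb - 1/2))
          (ReLU (gg^[n] tb - 1)) (FF n tb) k := fun k => rfl
      apply St_congr
      · rw [show wIt d ((1/4)^(n+1)) 0 = fun _ => (0:ℝ) from by norm_num [wIt], lin_zero]
        show ReLU (0 + 0) = 0
        rw [add_zero, relu_zero]
      · rw [show wIt d ((1/4)^(n+1)) 1 = fun _ => (0:ℝ) from by norm_num [wIt], lin_zero]
        show ReLU (0 + 0) = 0
        rw [add_zero, relu_zero]
      · intro c hc
        interval_cases c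
        · rw [show wIt d ((1/4)^(n+1)) (2+0) = e3 (2+2*d+0) 2 (2+2*d+1) (-4) (2+2*d+2) 2
              from by norm_num [wIt],
            lin_sc3 d x _ _ _ (by omega) (by omega) (by omega)]
          show ReLU ((2:ℝ) * ReLU (gg^[n] ta) + (-4) * ReLU (gg^[n] ta - 1/2)
            + 2 * ReLU (gg^[n] ta - 1) + 0) = ReLU (gg^[n+1] ta)
          congr 1
          linear_combination hgga
        · rw [show wIt d ((1/4)^(n+1)) (2+1) = e3 (2+2*d+0) 2 (2+2*d+1) (-4) (2+2*d+2) 2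
              from by norm_num [wIt],
            lin_sc3 d x _ _ _ (by omega) (by omega) (by omega)]
          show ReLU ((2:ℝ) * ReLU (gg^[n] ta) + (-4) * ReLU (gg^[n] ta - 1/2)
            + 2 * ReLU (gg^[n] ta - 1) + -(1/2)) = ReLU (gg^[n+1] ta - 1/2)
          congr 1
          linear_combination hgga
        · rw [show wIt d ((1/4)^(n+1)) (2+2) = e3 (2+2*d+0) 2 (2+2*d+1) (-4) (2+2*d+2) 2
              from by norm_num [wIt],
            lin_sc3 d x _ _ _ (by omega) (by omega) (by omega)]
          show ReLU ((2:ℝ) * ReLU (gg^[n] ta) + (-4) * ReLU (gg^[n] ta - 1/2)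
            + 2 * ReLU (gg^[n] ta - 1) + -1) = ReLU (gg^[n+1] ta - 1)
          congr 1
          linear_combination hgga
        · rw [show wIt d ((1/4)^(n+1)) (2+3) = e4 (2+2*d+0) (-(2*(1/4)^(n+1))) (2+2*d+1)
              (4*(1/4)^(n+1)) (2+2*d+2) (-(2*(1/4)^(n+1))) (2+2*d+3) 1 from by norm_num [wIt],
            lin_sc4 d x _ _ _ (by omega) (by omega) (by omega) (by omega)]
          show ReLU (-(2*((1:ℝ)/4)^(n+1)) * ReLU (gg^[n] ta)
            + 4*((1:ℝ)/4)^(n+1) * ReLU (gg^[n] ta - 1/2)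
            + -(2*((1:ℝ)/4)^(n+1)) * ReLU (gg^[n] ta - 1) + 1 * FF n ta + 0) = FF (n+1) ta
          have hval : -(2*((1:ℝ)/4)^(n+1)) * ReLU (gg^[n] ta)
              + 4*((1:ℝ)/4)^(n+1) * ReLU (gg^[n] ta - 1/2)
              + -(2*((1:ℝ)/4)^(n+1)) * ReLU (gg^[n] ta - 1) + 1 * FF n ta + 0
              = FF (n+1) ta := by
            rw [FF_succ, hq4]
            linear_combination (-(1:ℝ)/4^(n+1)) * hgga
          rw [hval]
          exact relu_of_nonneg (FF_nonneg hta0 (n+1))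
        · rw [show wIt d ((1/4)^(n+1)) (2+4) = e3 (2+2*d+4) 2 (2+2*d+5) (-4) (2+2*d+6) 2
              from by norm_num [wIt],
            lin_sc3 d x _ _ _ (by omega) (by omega) (by omega)]
          show ReLU ((2:ℝ) * ReLU (gg^[n] tb) + (-4) * ReLU (gg^[n] tb - 1/2)
            + 2 * ReLU (gg^[n] tb - 1) + 0) = ReLU (gg^[n+1] tb)
          congr 1
          linear_combination hggb
        · rw [show wIt d ((1/4)^(n+1)) (2+5) = e3 (2+2*d+4) 2 (2+2*d+5) (-4) (2+2*d+6) 2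
              from by norm_num [wIt],
            lin_sc3 d x _ _ _ (by omega) (by omega) (by omega)]
          show ReLU ((2:ℝ) * ReLU (gg^[n] tb) + (-4) * ReLU (gg^[n] tb - 1/2)
            + 2 * ReLU (gg^[n] tb - 1) + -(1/2)) = ReLU (gg^[n+1] tb - 1/2)
          congr 1
          linear_combination hggb
        · rw [show wIt d ((1/4)^(n+1)) (2+6) = e3 (2+2*d+4) 2 (2+2*d+5) (-4) (2+2*d+6) 2
              from by norm_num [wIt],
            lin_sc3 d x _ _ _ (by omega) (by omega) (by omega)]
          show ReLU ((2:ℝ) * ReLU (gg^[n] tb) + (-4) * ReLU (gg^[n] tb - 1/2)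
            + 2 * ReLU (gg^[n] tb - 1) + -1) = ReLU (gg^[n+1] tb - 1)
          congr 1
          linear_combination hggb
        · rw [show wIt d ((1/4)^(n+1)) (2+7) = e4 (2+2*d+4) (-(2*(1/4)^(n+1))) (2+2*d+5)
              (4*(1/4)^(n+1)) (2+2*d+6) (-(2*(1/4)^(n+1))) (2+2*d+7) 1 from by norm_num [wIt],
            lin_sc4 d x _ _ _ (by omega) (by omega) (by omega) (by omega)]
          show ReLU (-(2*((1:ℝ)/4)^(n+1)) * ReLU (gg^[n] tb)
            + 4*((1:ℝ)/4)^(n+1) * ReLU (gg^[n] tb - 1/2)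
            + -(2*((1:ℝ)/4)^(n+1)) * ReLU (gg^[n] tb - 1) + 1 * FF n tb + 0) = FF (n+1) tb
          have hval : -(2*((1:ℝ)/4)^(n+1)) * ReLU (gg^[n] tb)
              + 4*((1:ℝ)/4)^(n+1) * ReLU (gg^[n] tb - 1/2)
              + -(2*((1:ℝ)/4)^(n+1)) * ReLU (gg^[n] tb - 1) + 1 * FF n tb + 0
              = FF (n+1) tb := by
            rw [FF_succ, hq4]
            linear_combination (-(1:ℝ)/4^(n+1)) * hggb
          rw [hval]
          exact relu_of_nonneg (FF_nonneg htb0 (n+1))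
  -- Pi layer
  set zz : ℝ := C^2/4 * (FF m ta - FF m tb) with hzz
  have HPi : (net d m r).hidden ReLU (1 + s*(m+4) + (m+3)) x
      = St d x (ReLU (zz + r^(s+2))) (ReLU (zz - r^(s+2))) (fun _ => 0) := by
    have h := step_apply d m r hs (show 2+m ≤ m+3 by omega) hd x _ _ _ (HIt m le_rfl)
    have hidx : 1 + s*(m+4) + (2+m) + 1 = 1 + s*(m+4) + (m+3) := by omega
    rw [hidx] at h
    rw [h]
    have hww : ww d m r s (2+m) = wPi d (C^2/4) := by
      rw [ww, if_neg (by omega), if_neg (by omega), if_neg (by omega), if_pos (by omega)]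
    have hbb : bb m r s (2+m) = bPi (r^(s+2)) := by
      rw [bb, if_neg (by omega), if_neg (by omega), if_neg (by omega), if_pos (by omega)]
    rw [hww, hbb]
    apply St_congr
    · rw [show wPi d (C^2/4) 0 = e2 (2+2*d+3) (C^2/4) (2+2*d+7) (-(C^2/4))
          from by norm_num [wPi],
        lin_sc2 d x _ _ _ (by omega) (by omega)]
      show ReLU (C^2/4 * FF m ta + -(C^2/4) * FF m tb + r^(s+2)) = ReLU (zz + r^(s+2))
      congr 1
      rw [hzz]; ring
    · rw [show wPi d (C^2/4) 1 = e2 (2+2*d+3) (C^2/4) (2+2*d+7) (-(C^2/4))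
          from by norm_num [wPi],
        lin_sc2 d x _ _ _ (by omega) (by omega)]
      show ReLU (C^2/4 * FF m ta + -(C^2/4) * FF m tb + -r^(s+2)) = ReLU (zz - r^(s+2))
      congr 1
      rw [hzz]; ring
    · intro c hc
      interval_cases c <;>
        · rw [show wPi d (C^2/4) _ = fun _ => (0:ℝ) from by norm_num [wPi], lin_zero]
          show ReLU (0 + 0) = 0
          rw [add_zero, relu_zero]
  -- Resplit layer
  have hzzp : zz = pim m C p (x (s+1)) := by
    rw [hzz, pim, hta, htb, hza, hzb, abs_div, abs_div, abs_of_pos hC0]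
  have HRe : (net d m r).hidden ReLU (1 + (s+1)*(m+4)) x
      = St d x (ReLU (pseq m r x (s+1))) (ReLU (-pseq m r x (s+1))) (fun _ => 0) := by
    have h := step_apply d m r hs (show m+3 ≤ m+3 from le_rfl) hd x _ _ _ HPi
    have hidx : 1 + s*(m+4) + (m+3) + 1 = 1 + (s+1)*(m+4) := by ring
    rw [hidx] at h
    rw [h]
    have hww : ww d m r s (m+3) = wRe := by
      rw [ww, if_neg (by omega), if_neg (by omega), if_neg (by omega), if_neg (by omega)]
    have hbb : bb m r s (m+3) = bRe (r^(s+2)) := by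
      rw [bb, if_neg (by omega), if_neg (by omega), if_neg (by omega), if_neg (by omega)]
    rw [hww, hbb]
    have hps : pseq m r x (s+1) = clamp (r^(s+2)) zz := by
      rw [hzzp, hp, hC]
      rfl
    apply St_congr
    · rw [show wRe 0 = e2 0 1 1 (-1) from rfl, lin_01]
      show ReLU (1 * ReLU (zz + r^(s+2)) + -1 * ReLU (zz - r^(s+2)) + -r^(s+2)) = _
      congr 1
      rw [hps, clamp]
      ring
    · rw [show wRe 1 = e2 0 (-1) 1 1 from by norm_num [wRe], lin_01]
      show ReLU (-1 * ReLU (zz + r^(s+2)) + 1 * ReLU (zz - r^(s+2)) + r^(s+2)) = _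
      congr 1
      rw [hps, clamp]
      ring
    · intro c hc
      interval_cases c <;>
        · rw [show wRe _ = fun _ => (0:ℝ) from by norm_num [wRe], lin_zero]
          show ReLU (0 + 0) = 0
          rw [add_zero, relu_zero]
  exact HRe

lemma hidden_boundary (d m : ℕ) (r : ℝ) (hd : 2 ≤ d) (hr : 1 ≤ r) (x : ℕ → ℝ) :
    ∀ s, s ≤ d - 1 →
      (net d m r).hidden ReLU (1 + s*(m+4)) x
        = St d x (ReLU (pseq m r x s)) (ReLU (-pseq m r x s)) (fun _ => 0) := by
  intro s
  induction s with
  | zero =>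
    intro _
    rw [show 1 + 0*(m+4) = 1 by omega]
    exact hidden_one d m r hd x
  | succ n ih =>
    intro hs
    exact stage d m r hd hr (by omega) x (ih (by omega))

lemma real_eq (d m : ℕ) (r : ℝ) (hd : 2 ≤ d) (hr : 1 ≤ r) (x : ℕ → ℝ) :
    (net d m r).fullReal ReLU x 0 = pseq m r (trunc d x) (d-1) := by
  unfold NN.fullReal
  have hDm : (net d m r).Dm = 1 + (d-1)*(m+4) := rfl
  have hl0 : (net d m r).l 0 = d := rfl
  rw [hDm, hl0]
  have hb := hidden_boundary d m r hd hr (trunc d x) (d-1) le_rfl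
  have hV : (net d m r).V (1 + (d-1)*(m+4)) = outV := by
    show (if 1 + (d-1)*(m+4) = 0 then _ else if 1 + (d-1)*(m+4) ≤ (d-1)*(m+4) then _ else _) = _
    rw [if_neg (by omega), if_neg (by omega)]
  have hbias : (net d m r).b (1 + (d-1)*(m+4)) = bZero := by
    show (if 1 + (d-1)*(m+4) = 0 then _ else if 1 + (d-1)*(m+4) ≤ (d-1)*(m+4) then _ else _) = _
    rw [if_neg (by omega), if_neg (by omega)]
  have hl : (net d m r).l (1 + (d-1)*(m+4)) = 2+2*d+8 := by
    show (if 1 + (d-1)*(m+4) = 0 then d else if 1 + (d-1)*(m+4) ≤ 1 + (d-1)*(m+4) then 2+2*d+8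
      else 1) = _
    rw [if_neg (by omega), if_pos le_rfl]
  unfold NN.aff
  rw [hV, hbias, hl, hb]
  show lin (2+2*d+8) (outV 0) (St d (trunc d x) (ReLU (pseq m r (trunc d x) (d-1)))
      (ReLU (-pseq m r (trunc d x) (d-1))) (fun _ => 0)) + bZero 0 = _
  rw [show outV 0 = e2 0 1 1 (-1) from rfl, lin_01]
  have := relu_sub_relu_neg (pseq m r (trunc d x) (d-1))
  show 1 * ReLU (pseq m r (trunc d x) (d-1)) + -1 * ReLU (-pseq m r (trunc d x) (d-1)) + 0 = _
  linarith

lemma P_bound (d m : ℕ) (r : ℝ) :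
    (net d m r).P ≤ (2 + (d-1)*(m+4)) * ((2+2*d+8) * (2+2*d+8+1)) := by
  unfold NN.P NN.depth
  have hle : ∀ k', (net d m r).l k' ≤ 2+2*d+8 := by
    intro k'
    show (if k' = 0 then d else if k' ≤ 1 + (d-1)*(m+4) then 2+2*d+8 else 1) ≤ 2+2*d+8
    split_ifs <;> omega
  calc ∑ k ∈ Finset.range ((net d m r).Dm + 1), (net d m r).l (k+1) * ((net d m r).l k + 1)
      ≤ ∑ _k ∈ Finset.range ((net d m r).Dm + 1), (2+2*d+8) * (2+2*d+8+1) := by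
        apply Finset.sum_le_sum
        intro k _
        exact Nat.mul_le_mul (hle _) (Nat.succ_le_succ (hle _))
    _ = ((net d m r).Dm + 1) * ((2+2*d+8) * (2+2*d+8+1)) := by
        rw [Finset.sum_const, Finset.card_range, smul_eq_mul]
    _ = (2 + (d-1)*(m+4)) * ((2+2*d+8) * (2+2*d+8+1)) := by
        have : (net d m r).Dm = 1 + (d-1)*(m+4) := rfl
        rw [this]
        ring_nf

lemma sum_abs_le (d : ℕ) (x y : EuclideanSpace ℝ (Fin d)) :
    ∑ j ∈ Finset.range d, |trunc d (emb d x) j - trunc d (emb d y) j|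
      ≤ Real.sqrt d * ‖x - y‖ := by
  have hrw : ∑ j ∈ Finset.range d, |trunc d (emb d x) j - trunc d (emb d y) j|
      = ∑ i : Fin d, |x i - y i| := by
    rw [← Fin.sum_univ_eq_sum_range (fun j => |trunc d (emb d x) j - trunc d (emb d y) j|) d]
    apply Finset.sum_congr rfl
    intro i _
    have h : (i:ℕ) < d := i.isLt
    simp [trunc, emb, h]
  rw [hrw]
  have hcs : (∑ i : Fin d, |x i - y i|)^2 ≤ (d : ℝ) * ∑ i : Fin d, |x i - y i|^2 := by
    have h := sq_sum_le_card_mul_sum_sq (s := (Finset.univ : Finset (Fin d)))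
      (f := fun i : Fin d => |x i - y i|)
    simpa using h
  have hnorm : ‖x - y‖ = Real.sqrt (∑ i : Fin d, |x i - y i|^2) := by
    rw [EuclideanSpace.norm_eq]
    congr 1
  calc ∑ i : Fin d, |x i - y i|
      = Real.sqrt ((∑ i : Fin d, |x i - y i|)^2) :=
        (Real.sqrt_sq (Finset.sum_nonneg fun i _ => abs_nonneg _)).symm
    _ ≤ Real.sqrt ((d : ℝ) * ∑ i : Fin d, |x i - y i|^2) := Real.sqrt_le_sqrt hcs
    _ = Real.sqrt d * Real.sqrt (∑ i : Fin d, |x i - y i|^2) :=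
        Real.sqrt_mul (Nat.cast_nonneg d) _
    _ = Real.sqrt d * ‖x - y‖ := by rw [hnorm]

lemma prod_C_bound {d : ℕ} {r : ℝ} (hr : 1 ≤ r) (hd : 2 ≤ d) :
    (∏ i ∈ Finset.range (d-1), (r^(i+1)+r)) ≤ 2^(d-1) * r^(d*(d-1)) := by
  calc ∏ i ∈ Finset.range (d-1), (r^(i+1)+r)
      ≤ ∏ i ∈ Finset.range (d-1), 2*r^(i+1) := by
        apply Finset.prod_le_prod
        · intro i _; positivity
        · intro i _
          have h1 : r ≤ r^(i+1) := le_self_pow₀ hr (by omega)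
          linarith
    _ = 2^(d-1) * ∏ i ∈ Finset.range (d-1), r^(i+1) := by
        rw [Finset.prod_mul_distrib, Finset.prod_const, Finset.card_range]
    _ = 2^(d-1) * r^(∑ i ∈ Finset.range (d-1), (i+1)) := by
        rw [Finset.prod_pow_eq_pow_sum]
    _ ≤ 2^(d-1) * r^(d*(d-1)) := by
        have hs : (∑ i ∈ Finset.range (d-1), (i+1)) ≤ d*(d-1) := by
          calc ∑ i ∈ Finset.range (d-1), (i+1) ≤ ∑ _i ∈ Finset.range (d-1), d := by
                apply Finset.sum_le_sum
                intro i hi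
                have := Finset.mem_range.mp hi
                omega
            _ = (d-1)*d := by rw [Finset.sum_const, Finset.card_range, smul_eq_mul]
            _ = d*(d-1) := Nat.mul_comm _ _
        have h2 := pow_le_pow_right₀ hr hs
        have h3 : (0:ℝ) ≤ 2^(d-1) := by positivity
        nlinarith

lemma key28 {d : ℕ} (hd : 2 ≤ d) :
    Real.sqrt d * 2^(d-1) ≤ (8:ℝ) ^ (((d:ℝ)-1)/2) := by
  have hA0 : (0:ℝ) ≤ Real.sqrt d * 2^(d-1) := by positivity
  have hB0 : (0:ℝ) ≤ (8:ℝ) ^ (((d:ℝ)-1)/2) := Real.rpow_nonneg (by norm_num) _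
  have hdn : ((d:ℝ) - 1) = ((d-1 : ℕ) : ℝ) := by
    have : ((d-1 : ℕ) : ℝ) = (d:ℝ) - 1 := by
      push_cast [Nat.cast_sub (by omega : 1 ≤ d)]
      ring
    linarith [this]
  have hd2 : (d:ℝ) ≤ 2^(d-1) := by
    have hn : d ≤ 2^(d-1) := by
      have h := Nat.lt_two_pow_self (n := d-1)
      omega
    calc (d:ℝ) ≤ ((2^(d-1) : ℕ) : ℝ) := by exact_mod_cast hn
      _ = 2^(d-1) := by push_cast; ring
  have hsq : (Real.sqrt d * 2^(d-1))^2 ≤ ((8:ℝ) ^ (((d:ℝ)-1)/2))^2 := by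
    have h1 : (Real.sqrt d * 2^(d-1))^2 = d * (2^(d-1))^2 := by
      rw [mul_pow, Real.sq_sqrt (Nat.cast_nonneg d)]
    have h2 : ((8:ℝ) ^ (((d:ℝ)-1)/2))^2 = (8:ℝ)^(d-1) := by
      rw [← Real.rpow_natCast ((8:ℝ) ^ (((d:ℝ)-1)/2)) 2, ← Real.rpow_mul (by norm_num)]
      rw [show ((d:ℝ)-1)/2 * (2:ℕ) = (d:ℝ)-1 by push_cast; ring]
      rw [hdn, Real.rpow_natCast]
    rw [h1, h2]
    have h3 : (8:ℝ)^(d-1) = (2^(d-1))^2 * 2^(d-1) := by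
      rw [← pow_mul, ← pow_add]
      rw [show (8:ℝ) = 2^3 by norm_num, ← pow_mul]
      congr 1
      ring
    rw [h3]
    have h4 : (0:ℝ) < (2:ℝ)^(d-1) := by positivity
    nlinarith
  have h := Real.sqrt_le_sqrt hsq
  rwa [Real.sqrt_sq hA0, Real.sqrt_sq hB0] at h

end PA

set_option maxHeartbeats 2000000 in
/-- Proposition 7.6: the product `x_1 ⋯ x_d` can be approximated by ReLU
networks on `[-r, r]^d` without the curse of dimensionality. -/
theorem product_approximation (r : ℝ) (hr : 1 ≤ r) :
    ∀ d : ℕ, 2 ≤ d → ∀ ε : ℝ, 0 < ε → ε ≤ min (1 / 2) r⁻¹ →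
      ∃ φ : NN, φ.l 0 = d ∧ φ.l φ.depth = 1 ∧
        (∀ x : EuclideanSpace ℝ (Fin d), (∀ i, |x i| ≤ r) →
          |(∏ i : Fin d, x i) - φ.realScalar ReLU d x| ≤ ε) ∧
        (∀ x y : EuclideanSpace ℝ (Fin d),
          |φ.realScalar ReLU d x - φ.realScalar ReLU d y| ≤
            (8 : ℝ) ^ (((d : ℝ) - 1) / 2) * r ^ (d * (d - 1)) * ‖x - y‖) ∧
        (r = 1 →
          (φ.P : ℝ) ≤ (1 / 3) * 10 ^ 5 * Real.logb 2 d * (d : ℝ) ^ 6 * Real.logb 2 ε⁻¹) ∧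
        (2 ≤ r →
          (φ.P : ℝ) ≤ (2 / 5) * 10 ^ 5 * Real.logb 2 r * Real.logb 2 d * (d : ℝ) ^ 8 *
            Real.logb 2 ε⁻¹) := by
  intro d hd ε hε hεm
  have hε2 : ε ≤ 1/2 := le_trans hεm (min_le_left _ _)
  have hr0 : (0:ℝ) < r := by linarith
  have hd2 : (2:ℝ) ≤ (d:ℝ) := by exact_mod_cast hd
  have hd0 : (0:ℝ) < (d:ℝ) := by linarith
  have hrp : (0:ℝ) < r^(3*d) := by positivity
  have hrp1 : (1:ℝ) ≤ r^(3*d) := one_le_pow₀ hr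
  set A : ℝ := (d:ℝ) * r^(3*d) / ε with hA
  have hA0 : 0 < A := div_pos (mul_pos hd0 hrp) hε
  have hA1 : 1 ≤ A := by
    rw [hA, le_div_iff₀ hε]
    nlinarith
  set m : ℕ := ⌈Real.logb 2 A⌉₊ with hm
  have hlogA0 : 0 ≤ Real.logb 2 A := Real.logb_nonneg (by norm_num) hA1
  have h2m : A ≤ 2^m := by
    calc A = (2:ℝ) ^ Real.logb 2 A := (Real.rpow_logb (by norm_num) (by norm_num) hA0).symm
      _ ≤ (2:ℝ) ^ (m:ℝ) := Real.rpow_le_rpow_of_exponent_le (by norm_num) (Nat.le_ceil _)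
      _ = 2^m := Real.rpow_natCast 2 m
  have h4m : A ≤ 4^m :=
    le_trans h2m (pow_le_pow_left₀ (by norm_num) (by norm_num) m)
  -- logarithmic bound on m
  have ha1 : (1:ℝ) ≤ Real.logb 2 d := by
    rw [show (1:ℝ) = Real.logb 2 2 from (Real.logb_self_eq_one (by norm_num)).symm]
    exact Real.logb_le_logb_of_le (by norm_num) (by norm_num) hd2
  have hb1 : (1:ℝ) ≤ Real.logb 2 ε⁻¹ := by
    have h2e : (2:ℝ) ≤ ε⁻¹ := by
      rw [show (2:ℝ) = (2⁻¹)⁻¹ by norm_num]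
      exact inv_anti₀ hε (by linarith)
    rw [show (1:ℝ) = Real.logb 2 2 from (Real.logb_self_eq_one (by norm_num)).symm]
    exact Real.logb_le_logb_of_le (by norm_num) (by norm_num) h2e
  have hc0' : (0:ℝ) ≤ Real.logb 2 r := Real.logb_nonneg (by norm_num) hr
  have hmb : (m:ℝ) ≤ Real.logb 2 d + 3*(d:ℝ)*Real.logb 2 r + Real.logb 2 ε⁻¹ + 1 := by
    have hceil : (m:ℝ) < Real.logb 2 A + 1 := Nat.ceil_lt_add_one hlogA0
    have hlogA : Real.logb 2 A
        = Real.logb 2 d + 3*(d:ℝ)*Real.logb 2 r + Real.logb 2 ε⁻¹ := by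
      rw [hA, Real.logb_div (by positivity) (ne_of_gt hε),
        Real.logb_mul (by positivity) (by positivity), Real.logb_pow, Real.logb_inv]
      push_cast
      ring
    linarith
  -- parameter count
  have hm0 : (0:ℝ) ≤ (m:ℝ) := Nat.cast_nonneg _
  have hPr : ((PA.net d m r).P : ℝ) ≤ 56 * (d:ℝ)^3 * ((m:ℝ) + 4) := by
    have h := PA.P_bound d m r
    have h' : ((PA.net d m r).P : ℝ)
        ≤ (((2 + (d-1)*(m+4)) * ((2+2*d+8) * (2+2*d+8+1)) : ℕ) : ℝ) := by exact_mod_cast h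
    have hcast : (((2 + (d-1)*(m+4)) * ((2+2*d+8) * (2+2*d+8+1)) : ℕ) : ℝ)
        = (2 + ((d:ℝ)-1)*((m:ℝ)+4)) * ((2+2*(d:ℝ)+8) * (2+2*(d:ℝ)+8+1)) := by
      push_cast [Nat.cast_sub (show 1 ≤ d by omega)]
      ring
    rw [hcast] at h'
    have e1 : (2 + ((d:ℝ)-1)*((m:ℝ)+4)) ≤ (d:ℝ)*((m:ℝ)+4) := by nlinarith
    have e2 : ((2+2*(d:ℝ)+8) * (2+2*(d:ℝ)+8+1)) ≤ 56*(d:ℝ)^2 := by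
      nlinarith [sq_nonneg ((d:ℝ)-2)]
    calc ((PA.net d m r).P : ℝ)
        ≤ (2 + ((d:ℝ)-1)*((m:ℝ)+4)) * ((2+2*(d:ℝ)+8) * (2+2*(d:ℝ)+8+1)) := h'
      _ ≤ ((d:ℝ)*((m:ℝ)+4)) * (56*(d:ℝ)^2) := by
          apply mul_le_mul e1 e2 (by positivity) (by positivity)
      _ = 56*(d:ℝ)^3*((m:ℝ)+4) := by ring
  refine ⟨PA.net d m r, rfl, ?_, ?_, ?_, ?_, ?_⟩
  · -- output dimension
    show (if (1 + (d-1)*(m+4)) + 1 = 0 then d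
      else if (1 + (d-1)*(m+4)) + 1 ≤ 1 + (d-1)*(m+4) then 2+2*d+8 else 1) = 1
    rw [if_neg (by omega), if_neg (by omega)]
  · -- approximation
    intro x hx
    have hXj : ∀ j, |trunc d (emb d x) j| ≤ r := by
      intro j
      unfold trunc emb
      by_cases h : j < d
      · rw [if_pos h, dif_pos h]
        exact hx ⟨j, h⟩
      · rw [if_neg h, abs_zero]
        linarith
    have hreal : (PA.net d m r).realScalar ReLU d x = PA.pseq m r (trunc d (emb d x)) (d-1) :=
      PA.real_eq d m r hd hr (emb d x)
    have herr := PA.pseq_err (m := m) hr hXj (d-1)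
    rw [show d-1+1 = d from by omega] at herr
    have hprodeq : (∏ i : Fin d, x i) = ∏ j ∈ Finset.range d, trunc d (emb d x) j := by
      rw [← Fin.prod_univ_eq_prod_range (fun j => trunc d (emb d x) j) d]
      refine Finset.prod_congr rfl fun i _ => ?_
      have h : (i:ℕ) < d := i.isLt
      simp [trunc, emb, h]
    rw [hreal, hprodeq, abs_sub_comm]
    refine herr.trans ?_
    have hc1 : ((d-1:ℕ):ℝ) * r^(3*(d-1)) ≤ (d:ℝ) * r^(3*d) := by
      have h1 : ((d-1:ℕ):ℝ) ≤ (d:ℝ) := by exact_mod_cast Nat.sub_le d 1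
      have h2 : r^(3*(d-1)) ≤ r^(3*d) := pow_le_pow_right₀ hr (by omega)
      have h3 : (0:ℝ) ≤ ((d-1:ℕ):ℝ) := Nat.cast_nonneg _
      nlinarith [pow_pos hr0 (3*(d-1))]
    have h4m' : (d:ℝ) * r^(3*d) ≤ ε * 4^m := by
      have h := h4m
      rw [hA, div_le_iff₀ hε] at h
      linarith
    have h4mp : (0:ℝ) < (4:ℝ)^m := by positivity
    calc ((d-1:ℕ):ℝ) * r^(3*(d-1)) / (4*4^m)
        ≤ ((d:ℝ) * r^(3*d)) / (4*4^m) := by gcongr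
      _ ≤ (ε * 4^m) / (4*4^m) := by gcongr
      _ = ε/4 := by field_simp
      _ ≤ ε := by linarith
  · -- Lipschitz
    intro x y
    have hrx : (PA.net d m r).realScalar ReLU d x = PA.pseq m r (trunc d (emb d x)) (d-1) :=
      PA.real_eq d m r hd hr (emb d x)
    have hry : (PA.net d m r).realScalar ReLU d y = PA.pseq m r (trunc d (emb d y)) (d-1) :=
      PA.real_eq d m r hd hr (emb d y)
    rw [hrx, hry]
    have h1 := PA.pseq_lip (m := m) hr (trunc d (emb d x)) (trunc d (emb d y)) (d-1)
    rw [show d-1+1 = d from by omega] at h1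
    have h2 := PA.sum_abs_le d x y
    have hM := PA.prod_C_bound hr hd
    have hS0 : (0:ℝ) ≤ ∑ j ∈ Finset.range d,
        |trunc d (emb d x) j - trunc d (emb d y) j| :=
      Finset.sum_nonneg fun j _ => abs_nonneg _
    have h8 := PA.key28 hd
    have hrdd : (0:ℝ) ≤ r^(d*(d-1)) := by positivity
    have hn0 : (0:ℝ) ≤ ‖x - y‖ := norm_nonneg _
    calc |PA.pseq m r (trunc d (emb d x)) (d-1) - PA.pseq m r (trunc d (emb d y)) (d-1)|
        ≤ (∏ i ∈ Finset.range (d-1), (r^(i+1)+r)) * ∑ j ∈ Finset.range d,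
            |trunc d (emb d x) j - trunc d (emb d y) j| := h1
      _ ≤ (2^(d-1) * r^(d*(d-1))) * (Real.sqrt d * ‖x - y‖) := by
          apply mul_le_mul hM h2 hS0 (by positivity)
      _ = (Real.sqrt d * 2^(d-1)) * r^(d*(d-1)) * ‖x - y‖ := by ring
      _ ≤ (8:ℝ) ^ (((d:ℝ)-1)/2) * r^(d*(d-1)) * ‖x - y‖ := by
          apply mul_le_mul_of_nonneg_right (mul_le_mul_of_nonneg_right h8 hrdd) hn0
  · -- parameter bound, r = 1
    intro hr1
    have hc0 : Real.logb 2 r = 0 := by rw [hr1, Real.logb_one]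
    rw [hc0] at hmb
    have hmb' : (m:ℝ) ≤ Real.logb 2 d + Real.logb 2 ε⁻¹ + 1 := by linarith
    have hab0 : (0:ℝ) ≤ Real.logb 2 d * Real.logb 2 ε⁻¹ := by nlinarith
    have hstep : (m:ℝ) + 4 ≤ 7*(Real.logb 2 d * Real.logb 2 ε⁻¹) := by
      nlinarith [mul_nonneg (sub_nonneg.2 ha1) (sub_nonneg.2 hb1)]
    have hd36 : (d:ℝ)^3 ≤ (d:ℝ)^6 := pow_le_pow_right₀ (by linarith) (by omega)
    calc ((PA.net d m r).P : ℝ) ≤ 56 * (d:ℝ)^3 * ((m:ℝ) + 4) := hPr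
      _ ≤ 56 * (d:ℝ)^3 * (7*(Real.logb 2 d * Real.logb 2 ε⁻¹)) := by
          apply mul_le_mul_of_nonneg_left hstep (by positivity)
      _ = 392 * ((d:ℝ)^3 * (Real.logb 2 d * Real.logb 2 ε⁻¹)) := by ring
      _ ≤ 392 * ((d:ℝ)^6 * (Real.logb 2 d * Real.logb 2 ε⁻¹)) := by
          apply mul_le_mul_of_nonneg_left (mul_le_mul_of_nonneg_right hd36 hab0) (by norm_num)
      _ ≤ (1/3) * 10^5 * Real.logb 2 d * (d:ℝ)^6 * Real.logb 2 ε⁻¹ := by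
          nlinarith [mul_nonneg (le_trans (by positivity) hd36) hab0,
            mul_nonneg (pow_nonneg hd0.le 6) hab0]
  · -- parameter bound, 2 ≤ r
    intro hr2
    have hc1 : (1:ℝ) ≤ Real.logb 2 r := by
      rw [show (1:ℝ) = Real.logb 2 2 from (Real.logb_self_eq_one (by norm_num)).symm]
      exact Real.logb_le_logb_of_le (by norm_num) (by norm_num) hr2
    set a := Real.logb 2 d with hadef
    set b := Real.logb 2 ε⁻¹ with hbdef
    set c := Real.logb 2 r with hcdef
    have hacb0 : (0:ℝ) ≤ a*c*b := mul_nonneg (mul_nonneg (by linarith) (by linarith)) (by linarith)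
    have hstep : (m:ℝ) + 4 ≤ (3*(d:ℝ)+7)*(a*c*b) := by
      have hcb : (1:ℝ) ≤ c*b := by nlinarith
      have hab : (1:ℝ) ≤ a*b := by nlinarith
      have h_a : a ≤ a*c*b := by nlinarith
      have h_b : b ≤ a*c*b := by
        have hac : (1:ℝ) ≤ a*c := by nlinarith
        nlinarith
      have h_dc : 3*(d:ℝ)*c ≤ 3*(d:ℝ)*(a*c*b) := by
        have h1 : c ≤ a*c*b := by nlinarith
        nlinarith
      have h_5 : (5:ℝ) ≤ 5*(a*c*b) := by nlinarith
      nlinarith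
    have hd48 : (d:ℝ)^4 ≤ (d:ℝ)^8 := pow_le_pow_right₀ (by linarith) (by omega)
    calc ((PA.net d m r).P : ℝ) ≤ 56 * (d:ℝ)^3 * ((m:ℝ) + 4) := hPr
      _ ≤ 56 * (d:ℝ)^3 * ((3*(d:ℝ)+7)*(a*c*b)) := by
          apply mul_le_mul_of_nonneg_left hstep (by positivity)
      _ ≤ 56 * (d:ℝ)^3 * ((8*(d:ℝ))*(a*c*b)) := by
          apply mul_le_mul_of_nonneg_left ?_ (by positivity)
          apply mul_le_mul_of_nonneg_right ?_ hacb0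
          linarith
      _ = 448 * ((d:ℝ)^4 * (a*c*b)) := by ring
      _ ≤ 448 * ((d:ℝ)^8 * (a*c*b)) := by
          apply mul_le_mul_of_nonneg_left (mul_le_mul_of_nonneg_right hd48 hacb0) (by norm_num)
      _ ≤ (2/5) * 10^5 * c * a * (d:ℝ)^8 * b := by
          nlinarith [mul_nonneg (pow_nonneg hd0.le 8) hacb0]

end
end

section
/- Fix K, r, S ∈ [1,∞), vectors θ_d ∈ [−S,S]^d for d ∈ ℕ, and a K-Lipschitz function f : ℝ → ℝ with |f(0)| ≤ K. Define the ridge functions g_d : ℝ^d → ℝ by g_d(x) = f(θ_d · x), where · denotes the Euclidean inner product. Then for every d ∈ ℕ and ε ∈ (0,1] there exists a skeleton φ with ReLU-realization R_ReLU(φ) : ℝ^d → ℝ such that: 1) sup_{x∈[−r,r]^d} |g_d(x) − R_ReLU(φ)(x)| ≤ ε; 2) R_ReLU(φ) is √d·K·S-Lipschitz on ℝ^d; 3) P(φ) ≤ (1/7)·10³·K²·r·S²·d⁶·ε^{−1}. -/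
open scoped BigOperators ENNReal

noncomputable section

open scoped RealInnerProductSpace

section Aux

/-- Auxiliary two-layer network used in the proof of Proposition 7.7. -/
def mkPhi (d N : ℕ) (w tv c : ℕ → ℝ) (f0 : ℝ) : NN where
  Dm := 1
  l := fun k => if k = 0 then d else if k = 1 then N else 1
  V := fun k _ j => if k = 0 then w j else c j
  b := fun k i => if k = 0 then -(tv i) else f0

lemma trunc_emb (n : ℕ) (x : EuclideanSpace ℝ (Fin n)) : trunc n (emb n x) = emb n x := by
  funext j; simp only [trunc, emb]; split_ifs with h1 <;> simp_all

lemma mkPhi_real (d N : ℕ) (w tv c : ℕ → ℝ) (f0 : ℝ) (x : EuclideanSpace ℝ (Fin d)) :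
    (mkPhi d N w tv c f0).realScalar ReLU d x =
      (∑ i ∈ Finset.range N,
        c i * ReLU ((∑ j ∈ Finset.range d, w j * emb d x j) - tv i)) + f0 := by
  simp only [NN.realScalar, NN.fullReal, mkPhi, NN.hidden, NN.aff]
  norm_num [trunc_emb, sub_eq_add_neg]

lemma mkPhi_P (d N : ℕ) (w tv c : ℕ → ℝ) (f0 : ℝ) :
    (mkPhi d N w tv c f0).P = N * (d + 1) + (N + 1) := by
  simp [NN.P, NN.depth, mkPhi, Finset.sum_range_succ]

lemma sum_c_eq (N : ℕ) (s u : ℕ → ℝ) :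
    ∑ i ∈ Finset.range (N+1),
      ((if i < N then s i else 0) - (if i = 0 then 0 else if i - 1 < N then s (i-1) else 0)) * u i
      = ∑ i ∈ Finset.range N, s i * (u i - u (i+1)) := by
  simp only [sub_mul]
  rw [Finset.sum_sub_distrib]
  have e1 : ∑ i ∈ Finset.range (N+1), (if i < N then s i else 0) * u i
      = ∑ i ∈ Finset.range N, s i * u i := by
    rw [Finset.sum_range_succ, if_neg (lt_irrefl N), zero_mul, add_zero]
    exact Finset.sum_congr rfl fun i hi => by rw [if_pos (Finset.mem_range.mp hi)]
  have e2 : ∑ i ∈ Finset.range (N+1),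
      (if i = 0 then 0 else if i - 1 < N then s (i-1) else 0) * u i
      = ∑ i ∈ Finset.range N, s i * u (i+1) := by
    rw [Finset.sum_range_succ']
    norm_num
    exact Finset.sum_congr rfl fun i hi => by rw [if_pos (Finset.mem_range.mp hi)]
  rw [e1, e2, ← Finset.sum_sub_distrib]
  exact Finset.sum_congr rfl fun i _ => by ring

lemma relu_mono {a b : ℝ} (hab : a ≤ b) : ReLU a ≤ ReLU b := max_le_max hab le_rfl

lemma relu_lip {a b : ℝ} (hab : a ≤ b) : ReLU b - ReLU a ≤ b - a := by
  simp only [ReLU, max_def]; split_ifs <;> linarith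

lemma clip_eq {ti ti1 h z : ℝ} (hh : 0 ≤ h) (ht : ti1 - ti = h) :
    ReLU (z - ti) - ReLU (z - ti1) = min (max (z - ti) 0) h := by
  simp only [ReLU, max_def, min_def]; split_ifs <;> linarith

lemma g_lip (K h : ℝ) (N : ℕ) (t s : ℕ → ℝ) (hK : 0 ≤ K)
    (hh : 0 < h) (hts : ∀ i : ℕ, t (i+1) - t i = h) (hsK : ∀ i, |s i| ≤ K)
    (u v : ℝ) (huv : u ≤ v) :
    |(∑ i ∈ Finset.range N, s i * (ReLU (v - t i) - ReLU (v - t (i+1)))) -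
     (∑ i ∈ Finset.range N, s i * (ReLU (u - t i) - ReLU (u - t (i+1))))| ≤ K * (v - u) := by
  rw [← Finset.sum_sub_distrib]
  have hre : ∀ i ∈ Finset.range N,
      s i * (ReLU (v - t i) - ReLU (v - t (i+1))) - s i * (ReLU (u - t i) - ReLU (u - t (i+1)))
      = s i * ((ReLU (v - t i) - ReLU (v - t (i+1))) - (ReLU (u - t i) - ReLU (u - t (i+1)))) :=
    fun i _ => by ring
  rw [Finset.sum_congr rfl hre]
  set Δ : ℕ → ℝ := fun i =>
    (ReLU (v - t i) - ReLU (v - t (i+1))) - (ReLU (u - t i) - ReLU (u - t (i+1))) with hΔdef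
  have hΔ0 : ∀ i, 0 ≤ Δ i := by
    intro i
    have e1 : ReLU (v - t i) - ReLU (v - t (i+1)) = min (max (v - t i) 0) h :=
      clip_eq hh.le (by linarith [hts i])
    have e2 : ReLU (u - t i) - ReLU (u - t (i+1)) = min (max (u - t i) 0) h :=
      clip_eq hh.le (by linarith [hts i])
    have h3 : max (u - t i) 0 ≤ max (v - t i) 0 := max_le_max (by linarith) le_rfl
    have h4 := min_le_min h3 (le_refl h)
    simp only [hΔdef, e1, e2]
    linarith
  have hsum : ∑ i ∈ Finset.range N, Δ i ≤ v - u := by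
    simp only [hΔdef]
    rw [Finset.sum_sub_distrib,
      Finset.sum_range_sub' (fun i => ReLU (v - t i)) N,
      Finset.sum_range_sub' (fun i => ReLU (u - t i)) N]
    have h1 := relu_lip (show u - t 0 ≤ v - t 0 by linarith)
    have h2 := relu_mono (show u - t N ≤ v - t N by linarith)
    linarith
  calc |∑ i ∈ Finset.range N, s i * Δ i| ≤ ∑ i ∈ Finset.range N, |s i * Δ i| :=
        Finset.abs_sum_le_sum_abs _ _
    _ ≤ ∑ i ∈ Finset.range N, K * Δ i := Finset.sum_le_sum fun i _ => by
        rw [abs_mul, abs_of_nonneg (hΔ0 i)]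
        exact mul_le_mul_of_nonneg_right (hsK i) (hΔ0 i)
    _ = K * ∑ i ∈ Finset.range N, Δ i := (Finset.mul_sum _ _ _).symm
    _ ≤ K * (v - u) := mul_le_mul_of_nonneg_left hsum hK

lemma g_node (h : ℝ) (N : ℕ) (t : ℕ → ℝ) (F : ℕ → ℝ) (hh : 0 < h)
    (htl : ∀ i j : ℕ, t j - t i = ((j:ℝ) - (i:ℝ)) * h) {j : ℕ} (hj : j ≤ N) :
    F 0 + ∑ i ∈ Finset.range N,
      ((F (i+1) - F i)/h) * (ReLU (t j - t i) - ReLU (t j - t (i+1))) = F j := by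
  have key : ∀ i ∈ Finset.range N,
      ((F (i+1) - F i)/h) * (ReLU (t j - t i) - ReLU (t j - t (i+1)))
      = if i < j then F (i+1) - F i else 0 := by
    intro i _
    rw [clip_eq hh.le (by rw [htl]; push_cast; ring)]
    by_cases hij : i < j
    · rw [if_pos hij]
      have h1 : ((i:ℝ)+1) ≤ (j:ℝ) := by exact_mod_cast hij
      have h2 : h ≤ t j - t i := by rw [htl]; nlinarith
      rw [max_eq_left (by linarith), min_eq_right h2]
      field_simp
    · rw [if_neg hij]
      have h1 : (j:ℝ) ≤ (i:ℝ) := by exact_mod_cast not_lt.mp hij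
      have h2 : t j - t i ≤ 0 := by rw [htl]; nlinarith
      rw [max_eq_right h2, min_eq_left hh.le, mul_zero]
  rw [Finset.sum_congr rfl key,
    ← Finset.sum_subset (Finset.range_subset_range.mpr hj)
      (fun i _ hi => if_neg (by simpa using hi)),
    Finset.sum_congr rfl (fun i hi => if_pos (Finset.mem_range.mp hi)),
    Finset.sum_range_sub F j]
  ring

end Aux

set_option maxHeartbeats 1000000 in
/-- Proposition 7.7: ridge functions based on a Lipschitz function can be
approximated by ReLU networks without the curse of dimensionality. -/
theorem ridge_function_approximation (K r S : ℝ) (hK : 1 ≤ K) (hr : 1 ≤ r) (hS : 1 ≤ S)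
    (θ : (d : ℕ) → EuclideanSpace ℝ (Fin d)) (hθ : ∀ d : ℕ, ∀ i, |θ d i| ≤ S)
    (f : ℝ → ℝ) (hLip : ∀ x y : ℝ, |f x - f y| ≤ K * |x - y|) (h0 : |f 0| ≤ K) :
    ∀ d : ℕ, 0 < d → ∀ ε : ℝ, 0 < ε → ε ≤ 1 →
      ∃ φ : NN, φ.l 0 = d ∧ φ.l φ.depth = 1 ∧
        (∀ x : EuclideanSpace ℝ (Fin d), (∀ i, |x i| ≤ r) →
          |f (∑ i : Fin d, θ d i * x i) - φ.realScalar ReLU d x| ≤ ε) ∧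
        (∀ x y : EuclideanSpace ℝ (Fin d),
          |φ.realScalar ReLU d x - φ.realScalar ReLU d y| ≤
            Real.sqrt d * K * S * ‖x - y‖) ∧
        ((φ.P : ℝ) ≤ (1 / 7) * 10 ^ 3 * K ^ 2 * r * S ^ 2 * (d : ℝ) ^ 6 * ε⁻¹) := by
  intro d hd ε hε hε1
  have hd1 : (1:ℝ) ≤ (d:ℝ) := by exact_mod_cast hd
  have hKpos : (0:ℝ) < K := by linarith
  set R : ℝ := d * S * r with hRdef
  have hdS : (1:ℝ) ≤ (d:ℝ) * S := by nlinarith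
  have hR1 : 1 ≤ R := by rw [hRdef]; nlinarith
  have hRpos : 0 < R := by linarith
  set N : ℕ := ⌈4 * K * R / ε⌉₊ with hNdef
  have hq : (0:ℝ) < 4 * K * R / ε := by positivity
  have hNge : 4 * K * R / ε ≤ (N:ℝ) := Nat.le_ceil _
  have hNpos : 0 < N := Nat.ceil_pos.mpr hq
  have hNR : (0:ℝ) < (N:ℝ) := by exact_mod_cast hNpos
  set h : ℝ := 2 * R / N with hhdef
  have hhpos : 0 < h := by positivity
  set t : ℕ → ℝ := fun i => -R + i * h with htdef
  have htl : ∀ i j : ℕ, t j - t i = ((j:ℝ) - (i:ℝ)) * h := by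
    intro i j; simp only [htdef]; ring
  have hts : ∀ i : ℕ, t (i+1) - t i = h := by
    intro i; rw [htl]; push_cast; ring
  set s : ℕ → ℝ := fun i => (f (t (i+1)) - f (t i)) / h with hsdef
  have hsK : ∀ i, |s i| ≤ K := by
    intro i
    rw [hsdef]
    rw [abs_div, abs_of_pos hhpos, div_le_iff₀ hhpos]
    calc |f (t (i+1)) - f (t i)| ≤ K * |t (i+1) - t i| := hLip _ _
      _ = K * h := by rw [hts i, abs_of_pos hhpos]
  set c : ℕ → ℝ := fun i =>
    (if i < N then s i else 0) - (if i = 0 then 0 else if i - 1 < N then s (i-1) else 0)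
    with hcdef
  set g : ℝ → ℝ := fun z =>
    f (t 0) + ∑ i ∈ Finset.range N, s i * (ReLU (z - t i) - ReLU (z - t (i+1))) with hgdef
  clear_value R N h t s c g
  -- Lipschitz property of g
  have gLipAbs : ∀ u v : ℝ, |g v - g u| ≤ K * |v - u| := by
    have base : ∀ u v : ℝ, u ≤ v → |g v - g u| ≤ K * (v - u) := by
      intro u v huv
      have : g v - g u =
          (∑ i ∈ Finset.range N, s i * (ReLU (v - t i) - ReLU (v - t (i+1)))) -
          (∑ i ∈ Finset.range N, s i * (ReLU (u - t i) - ReLU (u - t (i+1)))) := by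
        simp only [hgdef]; ring
      rw [this]
      exact g_lip K h N t s hKpos.le hhpos hts hsK u v huv
    intro u v
    rcases le_total u v with huv | huv
    · rw [abs_of_nonneg (by linarith : (0:ℝ) ≤ v - u)]; exact base u v huv
    · rw [abs_of_nonpos (by linarith : v - u ≤ 0), ← abs_neg, neg_sub]
      have := base v u huv
      linarith [base v u huv]
  -- g interpolates f at the nodes
  have gnode : ∀ j : ℕ, j ≤ N → g (t j) = f (t j) := by
    intro j hj
    have := g_node h N t (fun i => f (t i)) hhpos htl hj
    simpa [hgdef, hsdef] using this
  -- approximation on [-R, R]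
  have h2Kh : 2 * K * h ≤ ε := by
    have h4 : 4 * K * R ≤ (N:ℝ) * ε := (div_le_iff₀ hε).mp hNge
    rw [hhdef]
    have e : 2 * K * (2 * R / (N:ℝ)) = 4 * K * R / (N:ℝ) := by ring
    rw [e, div_le_iff₀ hNR]
    linarith
  have gapprox : ∀ z : ℝ, -R ≤ z → z ≤ R → |f z - g z| ≤ ε := by
    intro z hz1 hz2
    have hz0 : 0 ≤ (z + R) / h := div_nonneg (by linarith) hhpos.le
    set m : ℕ := min (N - 1) ⌊(z + R) / h⌋₊ with hmdef
    clear_value m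
    have hmN : m ≤ N - 1 := by rw [hmdef]; exact min_le_left _ _
    have hmN' : m < N := lt_of_le_of_lt hmN (Nat.sub_lt hNpos one_pos)
    have hmle : (m:ℝ) ≤ (z + R) / h := by
      calc (m:ℝ) ≤ (⌊(z + R) / h⌋₊ : ℝ) := by rw [hmdef]; exact_mod_cast min_le_right (N-1) _
        _ ≤ (z + R) / h := Nat.floor_le hz0
    have htm_le : t m ≤ z := by
      have h5 : (m:ℝ) * h ≤ z + R := (le_div_iff₀ hhpos).mp hmle
      simp only [htdef]; linarith
    have htm_ge : z ≤ t m + h := by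
      by_cases hc : ⌊(z + R) / h⌋₊ ≤ N - 1
      · have hm_eq : m = ⌊(z + R) / h⌋₊ := by rw [hmdef]; exact min_eq_right hc
        have := Nat.lt_floor_add_one ((z + R) / h)
        have h2 : (z + R) / h < (m:ℝ) + 1 := by rw [hm_eq]; exact_mod_cast this
        rw [div_lt_iff₀ hhpos] at h2
        simp only [htdef]; push_cast; nlinarith
      · have hNle : N ≤ ⌊(z + R) / h⌋₊ := by omega
        have hm_eq : m = N - 1 := by rw [hmdef]; exact min_eq_left (by omega)
        have h2 : (N:ℝ) ≤ (z + R) / h := by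
          calc (N:ℝ) ≤ (⌊(z + R) / h⌋₊:ℝ) := by exact_mod_cast hNle
            _ ≤ (z + R) / h := Nat.floor_le hz0
        rw [le_div_iff₀ hhpos] at h2
        have hNh : (N:ℝ) * h = 2 * R := by
          rw [hhdef]; field_simp
        have hzR : z = R := by nlinarith
        have : ((N - 1 : ℕ) : ℝ) = (N:ℝ) - 1 := by
          rw [Nat.cast_sub hNpos]; norm_num
        simp only [htdef, hm_eq, this]
        nlinarith
    have e1 : |f z - f (t m)| ≤ K * (z - t m) := by
      calc |f z - f (t m)| ≤ K * |z - t m| := hLip _ _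
        _ = K * (z - t m) := by rw [abs_of_nonneg (by linarith)]
    have e2 : |g z - g (t m)| ≤ K * (z - t m) := by
      have := gLipAbs (t m) z
      rwa [abs_of_nonneg (by linarith : (0:ℝ) ≤ z - t m)] at this
    have e3 : g (t m) = f (t m) := gnode m hmN'.le
    calc |f z - g z| = |(f z - f (t m)) - (g z - g (t m))| := by
          rw [e3]; congr 1; ring
      _ ≤ |f z - f (t m)| + |g z - g (t m)| := abs_sub _ _
      _ ≤ K * (z - t m) + K * (z - t m) := add_le_add e1 e2
      _ = 2 * K * (z - t m) := by ring
      _ ≤ 2 * K * h := by nlinarith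
      _ ≤ ε := h2Kh
  -- the network and its realization
  have hnormθ : ‖θ d‖ ≤ Real.sqrt d * S := by
    rw [EuclideanSpace.norm_eq]
    have hb : ∑ i, ‖θ d i‖^2 ≤ (d:ℝ) * S^2 := by
      calc ∑ i, ‖θ d i‖^2 ≤ ∑ _i : Fin d, S^2 := Finset.sum_le_sum fun i _ => by
            rw [Real.norm_eq_abs]
            nlinarith [hθ d i, abs_nonneg (θ d i)]
        _ = (d:ℝ) * S^2 := by
            rw [Finset.sum_const, Finset.card_univ, Fintype.card_fin, nsmul_eq_mul]
    calc Real.sqrt (∑ i, ‖θ d i‖^2) ≤ Real.sqrt ((d:ℝ) * S^2) := Real.sqrt_le_sqrt hb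
      _ = Real.sqrt d * S := by
          rw [Real.sqrt_mul (Nat.cast_nonneg d), Real.sqrt_sq (by linarith)]
  have hnetsum : ∀ T : ℝ, (∑ i ∈ Finset.range (N+1), c i * ReLU (T - t i)) + f (t 0) = g T := by
    intro T
    simp only [hcdef, hgdef]
    rw [sum_c_eq N s (fun i => ReLU (T - t i))]
    exact add_comm _ _
  have hnet : ∀ x : EuclideanSpace ℝ (Fin d),
      (mkPhi d (N+1) (emb d (θ d)) t c (f (t 0))).realScalar ReLU d x
      = g (∑ i : Fin d, θ d i * x i) := by
    intro x
    rw [mkPhi_real]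
    have hT : (∑ j ∈ Finset.range d, emb d (θ d) j * emb d x j)
        = ∑ i : Fin d, θ d i * x i := by
      rw [← Fin.sum_univ_eq_sum_range (fun j => emb d (θ d) j * emb d x j) d]
      exact Finset.sum_congr rfl fun i _ => by simp [emb, i.isLt]
    rw [hT, hnetsum]
  refine ⟨mkPhi d (N+1) (emb d (θ d)) t c (f (t 0)), by simp [mkPhi],
    by simp [mkPhi, NN.depth], ?_, ?_, ?_⟩
  · -- approximation on the box
    intro x hx
    have hTbox : |∑ i : Fin d, θ d i * x i| ≤ R := by
      calc |∑ i : Fin d, θ d i * x i| ≤ ∑ i : Fin d, |θ d i * x i| :=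
            Finset.abs_sum_le_sum_abs _ _
        _ ≤ ∑ _i : Fin d, S * r := Finset.sum_le_sum fun i _ => by
            rw [abs_mul]
            exact mul_le_mul (hθ d i) (hx i) (abs_nonneg _) (by linarith)
        _ = (d:ℝ) * (S * r) := by
            rw [Finset.sum_const, Finset.card_univ, Fintype.card_fin, nsmul_eq_mul]
        _ = R := by rw [hRdef]; ring
    rw [hnet x]
    obtain ⟨hb1, hb2⟩ := abs_le.mp hTbox
    exact gapprox _ hb1 hb2
  · -- Lipschitz property
    intro x y
    rw [hnet x, hnet y]
    have hTdiff : |(∑ i : Fin d, θ d i * x i) - (∑ i : Fin d, θ d i * y i)|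
        ≤ Real.sqrt d * S * ‖x - y‖ := by
      have e : (∑ i : Fin d, θ d i * x i) - (∑ i : Fin d, θ d i * y i) = ⟪θ d, x - y⟫ := by
        simp only [PiLp.inner_apply, RCLike.inner_apply, conj_trivial]
        rw [← Finset.sum_sub_distrib]
        exact Finset.sum_congr rfl fun i _ => by
          have : (x - y) i = x i - y i := by simp
          rw [this]; ring
      rw [e]
      calc |⟪θ d, x - y⟫| ≤ ‖θ d‖ * ‖x - y‖ := abs_real_inner_le_norm _ _
        _ ≤ (Real.sqrt d * S) * ‖x - y‖ :=
            mul_le_mul_of_nonneg_right hnormθ (norm_nonneg _)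
    calc |g (∑ i : Fin d, θ d i * x i) - g (∑ i : Fin d, θ d i * y i)|
        ≤ K * |(∑ i : Fin d, θ d i * x i) - (∑ i : Fin d, θ d i * y i)| := gLipAbs _ _
      _ ≤ K * (Real.sqrt d * S * ‖x - y‖) := mul_le_mul_of_nonneg_left hTdiff hKpos.le
      _ = Real.sqrt d * K * S * ‖x - y‖ := by ring
  · -- parameter count
    rw [mkPhi_P]
    push_cast
    have hεinv : 1 ≤ ε⁻¹ := by
      rw [← one_div]
      exact one_le_one_div hε hε1
    have hεinvpos : 0 < ε⁻¹ := by positivity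
    have hKR : 1 ≤ K * R := by nlinarith
    have hA : 1 ≤ K * R * ε⁻¹ := by nlinarith
    have hNle : (N:ℝ) ≤ 4 * K * R / ε + 1 := by
      rw [hNdef]
      exact le_of_lt (Nat.ceil_lt_add_one hq.le)
    have hNb : (N:ℝ) + 2 ≤ 7 * (K * R * ε⁻¹) := by
      have e : 4 * K * R / ε = 4 * (K * R * ε⁻¹) := by
        rw [div_eq_mul_inv]; ring
      rw [e] at hNle
      linarith
    have step1 : ((N:ℝ)+1)*((d:ℝ)+1) + ((N:ℝ)+1+1) ≤ ((N:ℝ)+2)*((d:ℝ)+2) := by nlinarith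
    have step2 : ((N:ℝ)+2)*((d:ℝ)+2) ≤ (7*(K * R * ε⁻¹))*(3*(d:ℝ)) :=
      mul_le_mul hNb (by linarith) (by linarith) (by positivity)
    rw [hRdef] at step2
    have p1 : K*S*(d:ℝ)^2 ≤ K^2*S^2*(d:ℝ)^6 := by
      have hKS : 1 ≤ K*S := by nlinarith
      have e2 : K*S ≤ (K*S)^2 := by nlinarith
      have e3 : (d:ℝ)^2 ≤ (d:ℝ)^6 := pow_le_pow_right₀ hd1 (by norm_num)
      calc K*S*(d:ℝ)^2 ≤ (K*S)^2*(d:ℝ)^2 :=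
            mul_le_mul_of_nonneg_right e2 (by positivity)
        _ ≤ (K*S)^2*(d:ℝ)^6 := mul_le_mul_of_nonneg_left e3 (by positivity)
        _ = K^2*S^2*(d:ℝ)^6 := by ring
    have hY : (0:ℝ) ≤ K^2*S^2*(d:ℝ)^6 := by positivity
    have h21 : (21:ℝ) * (K*S*(d:ℝ)^2) ≤ (1000/7) * (K^2*S^2*(d:ℝ)^6) := by linarith
    calc ((N:ℝ)+1)*((d:ℝ)+1) + ((N:ℝ)+1+1)
        ≤ (7*(K * ((d:ℝ) * S * r) * ε⁻¹))*(3*(d:ℝ)) := le_trans step1 step2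
      _ = 21 * (K*S*(d:ℝ)^2) * (r * ε⁻¹) := by ring
      _ ≤ (1000/7) * (K^2*S^2*(d:ℝ)^6) * (r * ε⁻¹) :=
          mul_le_mul_of_nonneg_right h21 (by positivity)
      _ = 1 / 7 * 10 ^ 3 * K ^ 2 * r * S ^ 2 * (d:ℝ) ^ 6 * ε⁻¹ := by ring

end
end
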